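/- arXiv:2602.16283 — 11 statements merged into one kernel-verified Lean document; each statement's English description precedes it below -/
import Mathlib

section
/- Let μ ∈ ℝ, σ > 0, and let k, n be natural numbers. Then ∫_ℝ ((x−μ)/σ)^n · exp(−k·(x−μ)/σ) · f(x;μ,σ) dx = (−1)^n · Γ^{(n)}(k+1), where Γ^{(n)} denotes the n-th derivative of the real Gamma function. -/
open MeasureTheory Real

open Set Filter Asymptotics
open scoped Topology

noncomputable def gfn (n : ℕ) (t : ℝ) : ℂ := ((Real.log t) ^ n * Real.exp (-t) : ℝ)

lemma gfn_locInt (n : ℕ) : LocallyIntegrableOn (gfn n) (Ioi 0) := by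
  refine ContinuousOn.locallyIntegrableOn ?_ measurableSet_Ioi
  refine Complex.continuous_ofReal.comp_continuousOn ?_
  exact (((Real.continuousOn_log.mono (by
      intro x hx; exact ne_of_gt hx)).pow n).mul
    (Real.continuous_exp.comp continuous_neg).continuousOn)

lemma gfn_succ (n : ℕ) : (fun t : ℝ => Real.log t • gfn n t) = gfn (n+1) := by
  funext t
  simp only [gfn, Complex.real_smul]
  push_cast
  ring

lemma gfn_norm (n : ℕ) (t : ℝ) : ‖gfn n t‖ = |Real.log t| ^ n * Real.exp (-t) := by
  rw [show gfn n t = ((Real.log t ^ n * Real.exp (-t) : ℝ) : ℂ) from rfl, Complex.norm_real,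
    Real.norm_eq_abs, abs_mul, abs_pow, Real.abs_exp]

lemma gfn_top (n : ℕ) (a : ℝ) : gfn n =O[atTop] (fun t : ℝ => t ^ (-a)) := by
  rw [isBigO_iff]
  refine ⟨1, ?_⟩
  have h1 : ∀ᶠ t : ℝ in atTop, t ^ ((n : ℝ) + a) * Real.exp (-t) < 1 := by
    have := tendsto_rpow_mul_exp_neg_mul_atTop_nhds_zero ((n : ℝ) + a) 1 one_pos
    simp only [neg_one_mul] at this
    exact this.eventually_lt_const one_pos
  filter_upwards [h1, eventually_ge_atTop (1 : ℝ)] with t h1 ht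
  have ht0 : (0 : ℝ) < t := lt_of_lt_of_le one_pos ht
  have hlog : |Real.log t| ^ n ≤ t ^ n := by
    apply pow_le_pow_left₀ (abs_nonneg _)
    rw [abs_of_nonneg (Real.log_nonneg ht)]
    linarith [Real.log_le_sub_one_of_pos ht0]
  have hta : (0:ℝ) < t ^ a := Real.rpow_pos_of_pos ht0 _
  rw [gfn_norm, Real.norm_eq_abs, abs_of_pos (Real.rpow_pos_of_pos ht0 _), one_mul,
    Real.rpow_neg ht0.le, ← one_div, le_div_iff₀ hta]
  calc |Real.log t| ^ n * Real.exp (-t) * t ^ a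
      ≤ t ^ n * Real.exp (-t) * t ^ a := by gcongr
    _ = t ^ ((n : ℝ) + a) * Real.exp (-t) := by
        rw [Real.rpow_add ht0, Real.rpow_natCast]; ring
    _ ≤ 1 := h1.le

lemma gfn_bot (n : ℕ) {b : ℝ} (hb : 0 < b) : gfn n =O[𝓝[>] 0] (fun t : ℝ => t ^ (-b)) := by
  rw [isBigO_iff]
  refine ⟨1, ?_⟩
  set r : ℝ := b / (n + 1) with hr
  have hr0 : 0 < r := by positivity
  have hkey : Tendsto (fun t : ℝ => (|Real.log t| * t ^ r) ^ n * t ^ r) (𝓝[>] 0) (𝓝 0) := by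
    have h1 : Tendsto (fun t : ℝ => |Real.log t| * t ^ r) (𝓝[>] 0) (𝓝 0) := by
      have := (tendsto_log_mul_rpow_nhdsGT_zero hr0).abs
      rw [abs_zero] at this
      refine this.congr' ?_
      filter_upwards [self_mem_nhdsWithin] with t (ht : (0:ℝ) < t)
      rw [abs_mul, abs_of_nonneg (Real.rpow_nonneg ht.le _)]
    have h2 : Tendsto (fun t : ℝ => t ^ r) (𝓝[>] 0) (𝓝 0) := by
      have h := (Real.continuousAt_rpow_const 0 r (Or.inr hr0.le)).tendsto
      rw [Real.zero_rpow hr0.ne'] at h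
      exact h.mono_left nhdsWithin_le_nhds
    have := (h1.pow n).mul h2
    rwa [mul_zero] at this
  have hev : ∀ᶠ t : ℝ in 𝓝[>] 0, (|Real.log t| * t ^ r) ^ n * t ^ r < 1 :=
    hkey.eventually_lt_const one_pos
  filter_upwards [hev, self_mem_nhdsWithin] with t h1 (ht : (0:ℝ) < t)
  have hexp : Real.exp (-t) ≤ 1 := Real.exp_le_one_iff.mpr (by linarith)
  have htb : (0:ℝ) < t ^ b := Real.rpow_pos_of_pos ht _
  have hexpand : (|Real.log t| * t ^ r) ^ n * t ^ r = |Real.log t| ^ n * t ^ b := by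
    have hn : ((n : ℝ) + 1) ≠ 0 := by positivity
    have hre : r * (n : ℝ) + r = b := by rw [hr]; field_simp
    rw [mul_pow, ← Real.rpow_natCast (t ^ r) n, ← Real.rpow_mul ht.le,
      mul_assoc, ← Real.rpow_add ht, hre]
  rw [hexpand] at h1
  rw [gfn_norm, Real.norm_eq_abs, abs_of_pos (Real.rpow_pos_of_pos ht _), one_mul,
    Real.rpow_neg ht.le, ← one_div, le_div_iff₀ htb]
  calc |Real.log t| ^ n * Real.exp (-t) * t ^ b
      ≤ |Real.log t| ^ n * 1 * t ^ b := by gcongr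
    _ = |Real.log t| ^ n * t ^ b := by ring
    _ ≤ 1 := h1.le


lemma hasDerivAt_mellin_gfn (n : ℕ) {s : ℂ} (hs : 0 < s.re) :
    HasDerivAt (mellin (gfn n)) (mellin (gfn (n+1)) s) s := by
  have h := (mellin_hasDerivAt_of_isBigO_rpow (E := ℂ) (a := s.re + 1) (b := s.re / 2)
    (gfn_locInt n) (gfn_top n _) (by linarith) (gfn_bot n (by linarith)) (by linarith)).2
  rwa [gfn_succ n] at h

lemma iteratedDeriv_cGamma (n : ℕ) :
    ∀ s : ℂ, 0 < s.re → iteratedDeriv n Complex.Gamma s = mellin (gfn n) s := by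
  induction n with
  | zero =>
    intro s hs
    rw [iteratedDeriv_zero, Complex.Gamma_eq_integral hs,
      show Complex.GammaIntegral s = mellin (fun x : ℝ => ((Real.exp (-x) : ℝ) : ℂ)) s from
        congrFun Complex.GammaIntegral_eq_mellin s]
    congr 1
    funext t
    simp [gfn]
  | succ n ih =>
    intro s hs
    have hopen : IsOpen {z : ℂ | 0 < z.re} := isOpen_lt continuous_const Complex.continuous_re
    have hev : iteratedDeriv n Complex.Gamma =ᶠ[𝓝 s] mellin (gfn n) :=
      eventually_of_mem (hopen.mem_nhds hs) fun z hz => ih z hz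
    rw [iteratedDeriv_succ, hev.deriv_eq, (hasDerivAt_mellin_gfn n hs).deriv]

lemma iteratedDeriv_rGamma (n : ℕ) :
    ∀ x : ℝ, 0 < x → iteratedDeriv n Real.Gamma x = (mellin (gfn n) x).re := by
  induction n with
  | zero =>
    intro x hx
    have h := iteratedDeriv_cGamma 0 (x : ℂ) (by simpa using hx)
    rw [iteratedDeriv_zero] at h ⊢
    rw [← h, Complex.Gamma_ofReal, Complex.ofReal_re]
  | succ n ih =>
    intro x hx
    have hev : iteratedDeriv n Real.Gamma =ᶠ[𝓝 x] fun y : ℝ => (mellin (gfn n) y).re :=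
      eventually_of_mem (isOpen_Ioi.mem_nhds hx) fun y hy => ih y hy
    rw [iteratedDeriv_succ, hev.deriv_eq]
    exact ((hasDerivAt_mellin_gfn n (s := (x:ℂ)) (by simpa using hx)).real_of_complex).deriv

lemma mellin_gfn_nat (n k : ℕ) :
    (mellin (gfn n) (((k : ℝ) + 1 : ℝ) : ℂ)).re
      = ∫ t in Ioi (0:ℝ), t ^ k * (Real.log t ^ n * Real.exp (-t)) := by
  rw [mellin]
  have hcong : ∀ t ∈ Ioi (0:ℝ),
      (t : ℂ) ^ ((((k : ℝ) + 1 : ℝ) : ℂ) - 1) • gfn n t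
        = ((t ^ k * (Real.log t ^ n * Real.exp (-t)) : ℝ) : ℂ) := by
    intro t ht
    have h1 : ((((k : ℝ) + 1 : ℝ) : ℂ) - 1) = (k : ℂ) := by push_cast; ring
    rw [h1, Complex.cpow_natCast, smul_eq_mul, gfn]
    push_cast
    ring
  rw [setIntegral_congr_fun measurableSet_Ioi hcong]
  have h := integral_ofReal (𝕜 := ℂ) (f := fun t : ℝ => t ^ k * (Real.log t ^ n * Real.exp (-t)))
    (μ := volume.restrict (Ioi 0))
  exact (congrArg Complex.re h).trans (Complex.ofReal_re _)

/-- Gumbel(μ,σ) density. -/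
noncomputable def gumbelPdf (μ σ x : ℝ) : ℝ :=
  (1 / σ) * Real.exp (-((x - μ) / σ)) * Real.exp (-Real.exp (-((x - μ) / σ)))

theorem gumbel_moment_identity (μ σ : ℝ) (hσ : 0 < σ) (k n : ℕ) :
    ∫ x : ℝ, ((x - μ) / σ) ^ n * Real.exp (-(k : ℝ) * ((x - μ) / σ)) * gumbelPdf μ σ x
      = (-1 : ℝ) ^ n * iteratedDeriv n Real.Gamma ((k : ℝ) + 1) := by
  set H : ℝ → ℝ := fun u => u ^ n * Real.exp (-(k:ℝ)*u) * Real.exp (-u)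
    * Real.exp (-Real.exp (-u)) with hH
  set G : ℝ → ℝ := fun t => (-Real.log t) ^ n * t ^ k * Real.exp (-t) with hG
  have step1 : (∫ x : ℝ, ((x - μ) / σ) ^ n * Real.exp (-(k : ℝ) * ((x - μ) / σ))
      * gumbelPdf μ σ x) = ∫ u : ℝ, H u := by
    calc ∫ x : ℝ, ((x - μ) / σ) ^ n * Real.exp (-(k : ℝ) * ((x - μ) / σ)) * gumbelPdf μ σ x
        = ∫ x : ℝ, (1/σ) * H ((x - μ)/σ) := by
          congr 1; funext x; simp only [gumbelPdf, hH]; ring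
      _ = (1/σ) * ∫ x : ℝ, H ((x - μ)/σ) := integral_const_mul _ _
      _ = (1/σ) * ∫ y : ℝ, H (y/σ) := by
          rw [integral_sub_right_eq_self (fun y => H (y/σ)) μ]
      _ = (1/σ) * (|σ| • ∫ u : ℝ, H u) := by rw [Measure.integral_comp_div H σ]
      _ = ∫ u : ℝ, H u := by
          rw [abs_of_pos hσ, smul_eq_mul, ← mul_assoc, one_div,
            inv_mul_cancel₀ hσ.ne', one_mul]
  have hinj : InjOn (fun u : ℝ => Real.exp (-u)) univ :=
    (Real.exp_injective.comp neg_injective).injOn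
  have hderiv : ∀ u ∈ (univ : Set ℝ),
      HasDerivWithinAt (fun u : ℝ => Real.exp (-u)) (-Real.exp (-u)) univ u := by
    intro u _
    have := (hasDerivAt_neg u).exp
    rw [mul_neg_one] at this
    exact this.hasDerivWithinAt
  have himg : (fun u : ℝ => Real.exp (-u)) '' univ = Ioi 0 := by
    rw [image_univ, show (fun u : ℝ => Real.exp (-u)) = Real.exp ∘ Neg.neg from rfl,
      range_comp, neg_surjective.range_eq, image_univ, Real.range_exp]
  have step2 : (∫ u : ℝ, H u) = ∫ t in Ioi (0:ℝ), G t := by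
    have := integral_image_eq_integral_abs_deriv_smul MeasurableSet.univ hderiv hinj G
    rw [himg, Measure.restrict_univ] at this
    rw [this]
    congr 1
    funext u
    have hek : Real.exp (-u) ^ k = Real.exp (-(k:ℝ)*u) := by
      rw [← Real.exp_nat_mul]; congr 1; ring
    simp only [hG, hH, Real.log_exp, neg_neg, smul_eq_mul, abs_neg,
      abs_of_pos (Real.exp_pos (-u)), hek]
    ring
  have step3 : (∫ t in Ioi (0:ℝ), G t)
      = (-1:ℝ)^n * ∫ t in Ioi (0:ℝ), t ^ k * (Real.log t ^ n * Real.exp (-t)) := by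
    rw [← integral_const_mul]
    congr 1
    funext t
    have hnp : (-Real.log t) ^ n = (-1:ℝ) ^ n * Real.log t ^ n := by
      rw [neg_pow]
    simp only [hG, hnp]
    ring
  rw [step1, step2, step3, iteratedDeriv_rGamma n ((k:ℝ)+1) (by positivity), mellin_gfn_nat]
end

section
/- Let μ ∈ ℝ and σ > 0. Then the Fisher information entry i_{μμ} of the Gumbel(μ,σ) distribution satisfies ∫_ℝ (s_μ(x;μ,σ))² · f(x;μ,σ) dx = 1/σ². -/
open MeasureTheory Real

/-- Score of the Gumbel distribution with respect to the location parameter μ. -/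
noncomputable def gumbelScoreMu (μ σ x : ℝ) : ℝ :=
  (1 / σ) * (1 - Real.exp (-((x - μ) / σ)))

theorem gumbel_fisher_mu_mu (μ σ : ℝ) (hσ : 0 < σ) :
    ∫ x : ℝ, (gumbelScoreMu μ σ x) ^ 2 * gumbelPdf μ σ x = 1 / σ ^ 2 := by
  have hσ' : σ ≠ 0 := ne_of_gt hσ
  -- the antiderivative
  set F : ℝ → ℝ := fun x =>
    (1 / σ ^ 2) * (Real.exp (-Real.exp (-((x - μ) / σ))) *
      (Real.exp (-((x - μ) / σ)) ^ 2 + 1)) with hF_def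
  set f' : ℝ → ℝ := fun x => (gumbelScoreMu μ σ x) ^ 2 * gumbelPdf μ σ x with hf'_def
  have hderiv : ∀ x : ℝ, HasDerivAt F (f' x) x := by
    intro x
    have h1 : HasDerivAt (fun x : ℝ => -((x - μ) / σ)) (-(1 / σ)) x := by
      exact (((hasDerivAt_id x).sub_const μ).div_const σ).neg
    have hu : HasDerivAt (fun x : ℝ => Real.exp (-((x - μ) / σ)))
        (Real.exp (-((x - μ) / σ)) * (-(1 / σ))) x := h1.exp
    have hexp : HasDerivAt (fun x : ℝ => Real.exp (-Real.exp (-((x - μ) / σ))))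
        (Real.exp (-Real.exp (-((x - μ) / σ))) *
          (-(Real.exp (-((x - μ) / σ)) * (-(1 / σ))))) x := hu.neg.exp
    have hsq : HasDerivAt (fun x : ℝ => Real.exp (-((x - μ) / σ)) ^ 2 + 1)
        ((2 : ℕ) * Real.exp (-((x - μ) / σ)) ^ 1 *
          (Real.exp (-((x - μ) / σ)) * (-(1 / σ)))) x := by
      simpa using (hu.pow 2).add_const 1
    have := ((hexp.mul (hsq)).const_mul (1 / σ ^ 2))
    refine this.congr_deriv ?_
    simp only [hf'_def, gumbelScoreMu, gumbelPdf, pow_one]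
    field_simp
    ring
  have hnonneg : ∀ x : ℝ, 0 ≤ f' x := by
    intro x
    apply mul_nonneg (sq_nonneg _)
    unfold gumbelPdf
    positivity
  -- limit at +∞ : (x-μ)/σ → ∞, so u = exp(-(x-μ)/σ) → 0, F → 1/σ²
  have hz_top : Filter.Tendsto (fun x : ℝ => -((x - μ) / σ)) Filter.atTop Filter.atBot := by
    exact Filter.tendsto_neg_atTop_atBot.comp
      (Filter.Tendsto.atTop_div_const hσ
        (Filter.tendsto_atTop_add_const_right _ _ Filter.tendsto_id))
  have hu_top : Filter.Tendsto (fun x : ℝ => Real.exp (-((x - μ) / σ)))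
      Filter.atTop (nhds 0) := Real.tendsto_exp_atBot.comp hz_top
  have htop : Filter.Tendsto F Filter.atTop (nhds (1 / σ ^ 2)) := by
    have : Filter.Tendsto (fun x : ℝ =>
        (1 / σ ^ 2) * (Real.exp (-Real.exp (-((x - μ) / σ))) *
          (Real.exp (-((x - μ) / σ)) ^ 2 + 1))) Filter.atTop (nhds ((1 / σ ^ 2) * (Real.exp (-0) * (0 ^ 2 + 1)))) := by
      exact (((hu_top.neg.rexp).mul (((hu_top.pow 2)).add_const 1)).const_mul _)
    simpa [hF_def, one_div] using this
  -- limit at -∞ : u → ∞, F = (1/σ²)(u²+1)e^{-u} → 0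
  have hz_bot : Filter.Tendsto (fun x : ℝ => -((x - μ) / σ)) Filter.atBot Filter.atTop := by
    exact Filter.tendsto_neg_atBot_atTop.comp
      (Filter.Tendsto.atBot_div_const hσ
        (Filter.tendsto_atBot_add_const_right _ _ Filter.tendsto_id))
  have hpoly : Filter.Tendsto (fun u : ℝ => Real.exp (-u) * (u ^ 2 + 1)) Filter.atTop (nhds 0) := by
    have h2 : Filter.Tendsto (fun u : ℝ => u ^ 2 * Real.exp (-u)) Filter.atTop (nhds 0) :=
      Real.tendsto_pow_mul_exp_neg_atTop_nhds_zero 2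
    have h0 : Filter.Tendsto (fun u : ℝ => Real.exp (-u)) Filter.atTop (nhds 0) :=
      Real.tendsto_exp_atBot.comp Filter.tendsto_neg_atTop_atBot
    have := h2.add h0
    simp only [add_zero] at this
    convert this using 2 with u
    ring
  have hbot : Filter.Tendsto F Filter.atBot (nhds 0) := by
    have hcomp : Filter.Tendsto
        (fun x : ℝ => Real.exp (-Real.exp (-((x - μ) / σ))) * (Real.exp (-((x - μ) / σ)) ^ 2 + 1))
        Filter.atBot (nhds 0) := hpoly.comp ((Real.tendsto_exp_atTop).comp hz_bot)
    have := hcomp.const_mul (1 / σ ^ 2)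
    simpa [hF_def, one_div] using this
  -- integrability
  have hIoi : IntegrableOn f' (Set.Ioi (0 : ℝ)) :=
    integrableOn_Ioi_deriv_of_nonneg' (fun x _ => hderiv x) (fun x _ => hnonneg x) htop
  have hIio : IntegrableOn f' (Set.Iio (0 : ℝ)) := by
    have hG : ∀ x ∈ Set.Ici (0 : ℝ), HasDerivAt (fun x => -F (-x)) (f' (-x)) x := by
      intro x _
      have := ((hderiv (-x)).comp x (hasDerivAt_neg x)).neg
      refine this.congr_deriv ?_
      simp
    have hGtop : Filter.Tendsto (fun x : ℝ => -F (-x)) Filter.atTop (nhds 0) := by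
      have := (hbot.comp Filter.tendsto_neg_atTop_atBot).neg
      simpa using this
    have hcomp : IntegrableOn (fun x => f' (-x)) (Set.Ioi (0 : ℝ)) :=
      integrableOn_Ioi_deriv_of_nonneg' hG (fun x _ => hnonneg _) hGtop
    have key := (MeasurePreserving.integrableOn_comp_preimage
      (Measure.measurePreserving_neg (volume : Measure ℝ))
      (Homeomorph.neg ℝ).measurableEmbedding (f := f') (s := Set.Iio (0:ℝ)))
    apply key.1
    simpa [Function.comp_def] using hcomp
  have hint : Integrable f' := by
    have h := hIio.union ((integrableOn_Ici_iff_integrableOn_Ioi).2 hIoi)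
    rw [Set.Iio_union_Ici] at h
    rwa [integrableOn_univ] at h
  have := integral_of_hasDerivAt_of_tendsto hderiv hint hbot htop
  simpa using this
end

section
/- Let μ ∈ ℝ and σ > 0. Then the Fisher information cross entry i_{μσ} of the Gumbel(μ,σ) distribution satisfies ∫_ℝ s_μ(x;μ,σ) · s_σ(x;μ,σ) · f(x;μ,σ) dx = (γ − 1)/σ², where γ is the Euler–Mascheroni constant. -/
open MeasureTheory Real Set Filter Asymptotics

/-- Score of the Gumbel distribution with respect to the scale parameter σ. -/
noncomputable def gumbelScoreSigma (μ σ x : ℝ) : ℝ :=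
  ((x - μ) / σ ^ 2) * (1 - Real.exp (-((x - μ) / σ))) - 1 / σ


lemma logGamma_integrable (n : ℕ) :
    IntegrableOn (fun t : ℝ => t ^ n * Real.log t * Real.exp (-t)) (Ioi 0) := by
  have h := (mellin_hasDerivAt_of_isBigO_rpow (E := ℂ)
      (f := fun x : ℝ => ((Real.exp (-x) : ℝ) : ℂ)) (s := (n : ℂ) + 1)
      (a := ((n : ℂ) + 1).re + 1) (b := 0) ?_ ?_ (lt_add_one _) ?_ ?_).1
  · have h' : IntegrableOn (fun t : ℝ =>
        (((t : ℝ) ^ n * Real.log t * Real.exp (-t) : ℝ) : ℂ)) (Ioi 0) := by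
      refine h.congr_fun (fun t ht => ?_) measurableSet_Ioi
      rw [show (n : ℂ) + 1 - 1 = ((n : ℕ) : ℂ) by push_cast; ring]
      simp only [Complex.cpow_natCast, Complex.real_smul, smul_eq_mul]
      push_cast
      ring
    have h2 := h'.re
    refine (integrable_congr (Eventually.of_forall fun t => ?_)).mp h2
    simp only [RCLike.re_to_complex, Complex.ofReal_re]
  · refine (Continuous.continuousOn ?_).locallyIntegrableOn measurableSet_Ioi
    exact Complex.continuous_ofReal.comp (Real.continuous_exp.comp continuous_neg)
  · rw [← isBigO_norm_left]
    simp_rw [Complex.norm_real, isBigO_norm_left]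
    simpa only [neg_one_mul] using (isLittleO_exp_neg_mul_rpow_atTop zero_lt_one _).isBigO
  · simp_rw [neg_zero, rpow_zero]
    refine isBigO_const_of_tendsto (?_ : Tendsto _ _ (nhds (1 : ℂ))) one_ne_zero
    rw [(by simp : (1 : ℂ) = Real.exp (-0))]
    exact (Complex.continuous_ofReal.comp
      (Real.continuous_exp.comp continuous_neg)).continuousWithinAt
  · simp only [Complex.add_re, Complex.natCast_re, Complex.one_re]; positivity

lemma logGamma_value (n : ℕ) :
    ∫ t in Ioi (0:ℝ), t ^ n * Real.log t * Real.exp (-t)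
      = (n.factorial : ℝ) * (-Real.eulerMascheroniConstant + (harmonic n : ℝ)) := by
  have hre : (0:ℝ) < ((n : ℂ) + 1).re := by
    simp only [Complex.add_re, Complex.natCast_re, Complex.one_re]; positivity
  have h1 : HasDerivAt Complex.GammaIntegral
      (∫ t : ℝ in Ioi 0, (t : ℂ) ^ ((n : ℂ) + 1 - 1) * (Real.log t * Real.exp (-t)))
      ((n : ℂ) + 1) := Complex.hasDerivAt_GammaIntegral hre
  have h2 : HasDerivAt Complex.GammaIntegral
      (((n.factorial : ℝ) * (-Real.eulerMascheroniConstant + (harmonic n : ℝ)) : ℝ) : ℂ)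
      ((n : ℂ) + 1) := by
    have hmem : {z : ℂ | 0 < z.re} ∈ nhds ((n : ℂ) + 1) :=
      (isOpen_lt continuous_const Complex.continuous_re).mem_nhds hre
    have heq : Complex.GammaIntegral =ᶠ[nhds ((n : ℂ) + 1)] Complex.Gamma :=
      eventually_of_mem hmem fun z hz => (Complex.Gamma_eq_integral hz).symm
    refine HasDerivAt.congr_of_eventuallyEq ?_ heq
    have := Complex.hasDerivAt_Gamma_nat n
    refine this.congr_deriv ?_
    push_cast
    ring
  have hval := h1.unique h2
  have hcongr : ∫ t : ℝ in Ioi 0, (t : ℂ) ^ ((n : ℂ) + 1 - 1) * (Real.log t * Real.exp (-t))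
      = ∫ t : ℝ in Ioi 0, ((t ^ n * Real.log t * Real.exp (-t) : ℝ) : ℂ) := by
    refine setIntegral_congr_fun measurableSet_Ioi fun t ht => ?_
    rw [show (n : ℂ) + 1 - 1 = ((n : ℕ) : ℂ) by push_cast; ring]
    simp only [Complex.cpow_natCast]
    push_cast
    ring
  rw [hcongr] at hval
  exact Complex.ofReal_injective <| (integral_ofReal (𝕜 := ℂ)
    (f := fun t => t ^ n * Real.log t * Real.exp (-t))
    (μ := volume.restrict (Ioi 0))).symm.trans hval

lemma gumbel_g_integral :
    ∫ u : ℝ, (1 - Real.exp (-u)) * (u * (1 - Real.exp (-u)) - 1)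
        * (Real.exp (-u) * Real.exp (-Real.exp (-u)))
      = Real.eulerMascheroniConstant - 1 := by
  set g : ℝ → ℝ := fun u => (1 - Real.exp (-u)) * (u * (1 - Real.exp (-u)) - 1)
      * (Real.exp (-u) * Real.exp (-Real.exp (-u))) with hg
  have himg : (fun t : ℝ => -Real.log t) '' Ioi 0 = univ := by
    ext u
    simp only [mem_image, mem_Ioi, mem_univ, iff_true]
    exact ⟨Real.exp (-u), Real.exp_pos _, by rw [Real.log_exp]; ring⟩
  have hderiv : ∀ t ∈ Ioi (0:ℝ), HasDerivWithinAt (fun t : ℝ => -Real.log t) (-t⁻¹) (Ioi 0) t :=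
    fun t ht => ((Real.hasDerivAt_log (ne_of_gt ht)).neg).hasDerivWithinAt
  have hinj : InjOn (fun t : ℝ => -Real.log t) (Ioi 0) :=
    fun a ha b hb h => Real.log_injOn_pos ha hb (neg_injective h)
  have hchg := integral_image_eq_integral_abs_deriv_smul measurableSet_Ioi hderiv hinj g
  rw [himg, MeasureTheory.Measure.restrict_univ] at hchg
  rw [hchg]
  have hEq : EqOn (fun t : ℝ => |(-t⁻¹)| • g (-Real.log t))
      (fun t : ℝ => ((-(t ^ 0 * Real.log t * Real.exp (-t))
        + 2 * (t ^ 1 * Real.log t * Real.exp (-t))) - t ^ 2 * Real.log t * Real.exp (-t))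
        + (t * Real.exp (-t) - Real.exp (-t))) (Ioi 0) := by
    intro t ht
    have ht' : (0:ℝ) < t := ht
    have h1 : Real.exp (-(-Real.log t)) = t := by rw [neg_neg, Real.exp_log ht']
    simp only [hg, h1, smul_eq_mul, abs_neg, abs_inv, abs_of_pos ht']
    field_simp
    ring
  rw [setIntegral_congr_fun measurableSet_Ioi hEq]
  have hInt0 := logGamma_integrable 0
  have hInt1 := logGamma_integrable 1
  have hInt2 := logGamma_integrable 2
  have hIntE : IntegrableOn (fun t : ℝ => Real.exp (-t)) (Ioi 0) := by
    have := exp_neg_integrableOn_Ioi (0:ℝ) one_pos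
    refine this.congr_fun (fun t _ => ?_) measurableSet_Ioi
    norm_num
  have hIntTE : IntegrableOn (fun t : ℝ => t * Real.exp (-t)) (Ioi 0) := by
    have := Real.GammaIntegral_convergent (s := 2) two_pos
    refine (this.congr_fun (fun t ht => ?_) measurableSet_Ioi)
    have ht' : (0:ℝ) < t := ht
    dsimp only
    rw [show (2:ℝ) - 1 = 1 by norm_num, Real.rpow_one]
    ring
  have hvTE : ∫ t in Ioi (0:ℝ), t * Real.exp (-t) = 1 := by
    have hG := Real.Gamma_eq_integral (s := 2) two_pos
    rw [Real.Gamma_two] at hG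
    rw [hG]
    refine setIntegral_congr_fun measurableSet_Ioi fun t ht => ?_
    rw [show (2:ℝ) - 1 = 1 by norm_num, Real.rpow_one]
    ring
  have hA : IntegrableOn (fun t : ℝ => -(t ^ 0 * Real.log t * Real.exp (-t))
      + 2 * (t ^ 1 * Real.log t * Real.exp (-t)) - t ^ 2 * Real.log t * Real.exp (-t))
      (Ioi 0) := (hInt0.neg.add (hInt1.const_mul 2)).sub hInt2
  have hA1 : IntegrableOn (fun t : ℝ => -(t ^ 0 * Real.log t * Real.exp (-t))
      + 2 * (t ^ 1 * Real.log t * Real.exp (-t))) (Ioi 0) := hInt0.neg.add (hInt1.const_mul 2)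
  have hA0 : IntegrableOn (fun t : ℝ => -(t ^ 0 * Real.log t * Real.exp (-t))) (Ioi 0) :=
    hInt0.neg
  have hA2 : IntegrableOn (fun t : ℝ => 2 * (t ^ 1 * Real.log t * Real.exp (-t))) (Ioi 0) :=
    hInt1.const_mul 2
  have hB : IntegrableOn (fun t : ℝ => t * Real.exp (-t) - Real.exp (-t)) (Ioi 0) :=
    hIntTE.sub hIntE
  rw [integral_add hA hB, integral_sub hA1 hInt2, integral_add hA0 hA2, integral_neg,
    integral_const_mul, integral_sub hIntTE hIntE,
    logGamma_value 0, logGamma_value 1, logGamma_value 2, hvTE, integral_exp_neg_Ioi_zero]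
  norm_num [harmonic_succ]
  ring

theorem gumbel_fisher_mu_sigma (μ σ : ℝ) (hσ : 0 < σ) :
    ∫ x : ℝ, gumbelScoreMu μ σ x * gumbelScoreSigma μ σ x * gumbelPdf μ σ x
      = (Real.eulerMascheroniConstant - 1) / σ ^ 2 := by
  have hσ' : σ ≠ 0 := hσ.ne'
  set g : ℝ → ℝ := fun u => (1 - Real.exp (-u)) * (u * (1 - Real.exp (-u)) - 1)
      * (Real.exp (-u) * Real.exp (-Real.exp (-u))) with hg
  have hF : ∀ x : ℝ, gumbelScoreMu μ σ x * gumbelScoreSigma μ σ x * gumbelPdf μ σ x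
      = σ⁻¹ ^ 3 * g ((x - μ) / σ) := by
    intro x
    simp only [gumbelScoreMu, gumbelScoreSigma, gumbelPdf, hg]
    field_simp
  simp_rw [hF]
  rw [integral_const_mul]
  have hshift : ∫ x : ℝ, g ((x - μ) / σ) = σ * ∫ u : ℝ, g u := by
    rw [show (fun x : ℝ => g ((x - μ) / σ)) = fun x : ℝ => (fun y => g (y / σ)) (x - μ) from rfl]
    rw [integral_sub_right_eq_self (fun y => g (y / σ)) μ]
    rw [MeasureTheory.Measure.integral_comp_div g σ, abs_of_pos hσ, smul_eq_mul]
  rw [hshift, gumbel_g_integral]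
  field_simp
end

section
/- Let σ > 0, ξ > 0, and let k, n be natural numbers. Then ∫_0^∞ (ξx/σ)^{−k/ξ} · (log(ξx/σ))^n · f(x;σ,ξ) dx = (−ξ)^n · Γ^{(n)}(k+1), where Γ^{(n)} denotes the n-th derivative of the real Gamma function. -/
open MeasureTheory Real

/-- Density of the two-parameter GEV distribution GEV₂(σ,ξ), for x > 0 and ξ > 0. -/
noncomputable def gev2Pdf (σ ξ x : ℝ) : ℝ :=
  (1 / σ) * (ξ * x / σ) ^ (-1 - 1 / ξ) * Real.exp (-(ξ * x / σ) ^ (-1 / ξ))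

open Set Filter Asymptotics Complex

/-- Auxiliary complex-valued integrand family for the Mellin transform. -/
noncomputable def gevFc (n : ℕ) : ℝ → ℂ :=
  fun t => ((Real.log t ^ n * Real.exp (-t) : ℝ) : ℂ)

lemma gevFc_succ (n : ℕ) (t : ℝ) : gevFc (n + 1) t = Real.log t • gevFc n t := by
  simp only [gevFc, Complex.real_smul, pow_succ]
  push_cast
  ring

lemma gevFc_locInt (n : ℕ) : LocallyIntegrableOn (gevFc n) (Set.Ioi 0) := by
  apply ContinuousOn.locallyIntegrableOn _ measurableSet_Ioi
  apply Complex.continuous_ofReal.comp_continuousOn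
  exact ((Real.continuousOn_log.mono fun t ht => ne_of_gt ht).pow n).mul
    (Real.continuous_exp.comp continuous_neg).continuousOn

lemma gevFc_top (n : ℕ) (a : ℝ) : gevFc n =O[atTop] (· ^ (-a)) := by
  induction n generalizing a with
  | zero =>
    refine IsBigO.trans ?_ (isLittleO_exp_neg_mul_rpow_atTop one_pos (-a)).isBigO
    apply isBigO_of_le
    intro t
    simp only [gevFc, pow_zero, one_mul, Complex.norm_real, Real.norm_eq_abs, Real.abs_exp,
      neg_one_mul]
    exact le_refl _
  | succ n ih =>
    have h := isBigO_rpow_top_log_smul (show a < a + 1 by linarith) (ih (a + 1))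
    exact h.congr_left fun t => (gevFc_succ n t).symm

lemma gevFc_zero (n : ℕ) {b : ℝ} (hb : 0 < b) : gevFc n =O[nhdsWithin 0 (Set.Ioi 0)] (· ^ (-b)) := by
  induction n generalizing b with
  | zero =>
    rw [isBigO_iff]
    refine ⟨1, ?_⟩
    filter_upwards [Ioo_mem_nhdsGT_of_mem (Set.left_mem_Ico.mpr zero_lt_one)] with t ht
    have h1 : Real.exp (-t) ≤ 1 := Real.exp_le_one_iff.mpr (by linarith [ht.1])
    have h2 : (1 : ℝ) ≤ t ^ (-b) :=
      Real.one_le_rpow_of_pos_of_le_one_of_nonpos ht.1 ht.2.le (by linarith)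
    have h3 : ‖gevFc 0 t‖ = Real.exp (-t) := by
      simp only [gevFc, pow_zero, one_mul, Complex.norm_real, Real.norm_eq_abs, Real.abs_exp]
    rw [h3, one_mul, Real.norm_eq_abs]
    calc Real.exp (-t) ≤ 1 := h1
      _ ≤ |t ^ (-b)| := le_trans h2 (le_abs_self _)
  | succ n ih =>
    have h := isBigO_rpow_zero_log_smul (show b / 2 < b by linarith) (ih (half_pos hb))
    exact h.congr_left fun t => (gevFc_succ n t).symm

lemma mellin_gevFc_succ (n : ℕ) (s : ℂ) :
    mellin (fun t => Real.log t • gevFc n t) s = mellin (gevFc (n + 1)) s := by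
  congr 1
  funext t
  exact (gevFc_succ n t).symm

lemma mellin_gevFc_hasDerivAt (n : ℕ) {s : ℂ} (hs : 0 < s.re) :
    HasDerivAt (mellin (gevFc n)) (mellin (gevFc (n + 1)) s) s := by
  have key := mellin_hasDerivAt_of_isBigO_rpow (E := ℂ) (gevFc_locInt n)
    (gevFc_top n (s.re + 1)) (lt_add_one _) (gevFc_zero n (half_pos hs)) (half_lt_self hs)
  rw [← mellin_gevFc_succ n s]
  exact key.2

/-- The real Mellin-type integral. -/
noncomputable def gevGn (n : ℕ) (s : ℝ) : ℝ :=
  ∫ t in Set.Ioi (0 : ℝ), t ^ (s - 1) * Real.log t ^ n * Real.exp (-t)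

lemma mellin_gevFc_real (n : ℕ) {s : ℝ} (_hs : 0 < s) :
    mellin (gevFc n) (s : ℂ) = ((gevGn n s : ℝ) : ℂ) := by
  rw [mellin, gevGn]
  have h2 : (∫ t in Set.Ioi (0 : ℝ), (t : ℂ) ^ ((s : ℂ) - 1) • gevFc n t)
      = ∫ t in Set.Ioi (0 : ℝ),
          ((t ^ (s - 1) * Real.log t ^ n * Real.exp (-t) : ℝ) : ℂ) := by
    refine setIntegral_congr_fun measurableSet_Ioi fun t ht => ?_
    have h1 : ((s : ℂ) - 1) = ((s - 1 : ℝ) : ℂ) := by push_cast; ring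
    rw [gevFc, h1, ← Complex.ofReal_cpow (le_of_lt ht), smul_eq_mul]
    push_cast
    ring
  rw [h2]
  exact integral_ofReal

lemma iteratedDeriv_Gamma_eq (n : ℕ) : ∀ s : ℝ, 0 < s →
    iteratedDeriv n Real.Gamma s = gevGn n s := by
  induction n with
  | zero =>
    intro s hs
    rw [iteratedDeriv_zero]
    have h0 : Real.Gamma s = (Complex.Gamma (s : ℂ)).re := by
      rw [Complex.Gamma_ofReal, Complex.ofReal_re]
    rw [h0, Complex.Gamma_eq_integral (by simpa using hs),
      Complex.GammaIntegral_eq_mellin]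
    have h1 : (fun x : ℝ => ((Real.exp (-x) : ℝ) : ℂ)) = gevFc 0 := by
      funext t
      simp [gevFc]
    rw [h1, mellin_gevFc_real 0 hs, Complex.ofReal_re]
  | succ n ih =>
    intro s hs
    rw [iteratedDeriv_succ]
    have hev : iteratedDeriv n Real.Gamma =ᶠ[nhds s] gevGn n := by
      filter_upwards [Ioi_mem_nhds hs] with x hx using ih x hx
    rw [hev.deriv_eq]
    have key : HasDerivAt (mellin (gevFc n)) (mellin (gevFc (n + 1)) (s : ℂ)) (s : ℂ) :=
      mellin_gevFc_hasDerivAt n (by simpa using hs)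
    have hre := key.real_of_complex
    have hd : HasDerivAt (gevGn n) ((mellin (gevFc (n + 1)) (s : ℂ)).re) s := by
      refine hre.congr_of_eventuallyEq ?_
      filter_upwards [Ioi_mem_nhds hs] with x hx
      rw [mellin_gevFc_real n hx, Complex.ofReal_re]
    rw [hd.deriv, mellin_gevFc_real (n + 1) hs, Complex.ofReal_re]

theorem gev2_moment_identity (σ ξ : ℝ) (hσ : 0 < σ) (hξ : 0 < ξ) (k n : ℕ) :
    ∫ x in Set.Ioi (0 : ℝ),
        (ξ * x / σ) ^ (-(k : ℝ) / ξ) * (Real.log (ξ * x / σ)) ^ n * gev2Pdf σ ξ x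
      = (-ξ) ^ n * iteratedDeriv n Real.Gamma ((k : ℝ) + 1) := by
  have hσ' : σ ≠ 0 := hσ.ne'
  have hξ' : ξ ≠ 0 := hξ.ne'
  set H : ℝ → ℝ := fun x =>
    (ξ * x / σ) ^ (-(k : ℝ) / ξ) * (Real.log (ξ * x / σ)) ^ n * gev2Pdf σ ξ x with hH
  set K : ℝ → ℝ := fun u =>
    u ^ (-(k : ℝ) / ξ) * (Real.log u) ^ n *
      ((1 / σ) * u ^ (-1 - 1 / ξ) * Real.exp (-u ^ (-1 / ξ))) with hK
  have harg : ∀ u : ℝ, ξ * (σ / ξ * u) / σ = u := by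
    intro u; field_simp
  have hHK : ∀ u : ℝ, H (σ / ξ * u) = K u := by
    intro u
    rw [hH, hK]
    simp only [gev2Pdf, harg u]
  have h1 : (∫ x in Set.Ioi (0 : ℝ), H x) = (σ / ξ) • ∫ u in Set.Ioi (0 : ℝ), K u := by
    have := integral_comp_mul_left_Ioi H 0 (show (0 : ℝ) < σ / ξ by positivity)
    rw [mul_zero] at this
    have h2 : (∫ x in Set.Ioi (0 : ℝ), H (σ / ξ * x)) = ∫ u in Set.Ioi (0 : ℝ), K u :=
      setIntegral_congr_fun measurableSet_Ioi fun u _ => hHK u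
    rw [h2] at this
    rw [this, smul_smul, mul_inv_cancel₀ (by positivity), one_smul]
  have h3 : (∫ u in Set.Ioi (0 : ℝ), K u)
      = ∫ t in Set.Ioi (0 : ℝ), (|(-ξ)| * t ^ (-ξ - 1)) • K (t ^ (-ξ)) :=
    (integral_comp_rpow_Ioi K (neg_ne_zero.mpr hξ')).symm
  have h4 : (∫ t in Set.Ioi (0 : ℝ), (|(-ξ)| * t ^ (-ξ - 1)) • K (t ^ (-ξ)))
      = ∫ t in Set.Ioi (0 : ℝ),
          (ξ / σ) * ((-ξ) ^ n * (t ^ ((k : ℝ) + 1 - 1) * Real.log t ^ n * Real.exp (-t))) := by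
    refine setIntegral_congr_fun measurableSet_Ioi fun t ht => ?_
    have ht : (0 : ℝ) < t := ht
    have e1 : (t ^ (-ξ)) ^ (-(k : ℝ) / ξ) = t ^ ((k : ℝ) + 1 - 1) := by
      rw [← Real.rpow_mul ht.le]
      congr 1
      field_simp
      ring
    have e2 : (t ^ (-ξ)) ^ (-1 - 1 / ξ : ℝ) = t ^ (ξ + 1) := by
      rw [← Real.rpow_mul ht.le]
      congr 1
      field_simp
      ring
    have e3 : (t ^ (-ξ)) ^ (-1 / ξ : ℝ) = t := by
      rw [← Real.rpow_mul ht.le, show -ξ * (-1 / ξ) = 1 by field_simp, Real.rpow_one]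
    have e4 : Real.log (t ^ (-ξ)) = -ξ * Real.log t := Real.log_rpow ht _
    have e5 : t ^ (-ξ - 1) = (t ^ (ξ + 1))⁻¹ := by
      rw [← Real.rpow_neg ht.le]
      congr 1
      ring
    have habs : |(-ξ)| = ξ := by rw [abs_neg, abs_of_pos hξ]
    rw [hK, smul_eq_mul]
    simp only [e1, e2, e3, e4, e5, habs, mul_pow]
    have htp : t ^ (ξ + 1) ≠ 0 := ne_of_gt (Real.rpow_pos_of_pos ht _)
    field_simp
  have h5 : (∫ t in Set.Ioi (0 : ℝ),
      (ξ / σ) * ((-ξ) ^ n * (t ^ ((k : ℝ) + 1 - 1) * Real.log t ^ n * Real.exp (-t))))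
      = (ξ / σ * (-ξ) ^ n) * gevGn n ((k : ℝ) + 1) := by
    rw [gevGn, ← integral_const_mul]
    exact setIntegral_congr_fun measurableSet_Ioi fun t _ => by ring
  rw [show (∫ x in Set.Ioi (0 : ℝ),
        (ξ * x / σ) ^ (-(k : ℝ) / ξ) * (Real.log (ξ * x / σ)) ^ n * gev2Pdf σ ξ x)
      = ∫ x in Set.Ioi (0 : ℝ), H x from rfl,
    h1, h3, h4, h5, iteratedDeriv_Gamma_eq n ((k : ℝ) + 1) (by positivity)]
  rw [smul_eq_mul]
  field_simp
end

section
/- Let σ > 0 and ξ > 0. Then the Fisher information entry i_{σσ} of the GEV₂(σ,ξ) distribution satisfies ∫_0^∞ (s_σ(x;σ,ξ))² · f(x;σ,ξ) dx = 1/(ξσ)². -/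
open MeasureTheory Real

/-- Score of the GEV₂ distribution with respect to the scale parameter σ. -/
noncomputable def gev2ScoreSigma (σ ξ x : ℝ) : ℝ :=
  (1 / (ξ * σ)) * (1 - (ξ * x / σ) ^ (-1 / ξ))

lemma gev2_aux_integral : ∫ u in Set.Ioi (0:ℝ), (1 - u) ^ 2 * Real.exp (-u) = 1 := by
  have hint : IntegrableOn (fun u : ℝ => (1 - u) ^ 2 * Real.exp (-u)) (Set.Ioi 0) := by
    have h1 := Real.GammaIntegral_convergent (by norm_num : (0:ℝ) < 1)
    have h2 := Real.GammaIntegral_convergent (by norm_num : (0:ℝ) < 2)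
    have h3 := Real.GammaIntegral_convergent (by norm_num : (0:ℝ) < 3)
    have hI : IntegrableOn
        (fun x : ℝ => (Real.exp (-x) * x ^ ((1:ℝ)-1) - 2 * (Real.exp (-x) * x ^ ((2:ℝ)-1)))
          + Real.exp (-x) * x ^ ((3:ℝ)-1)) (Set.Ioi 0) :=
      (h1.sub (h2.const_mul 2)).add h3
    refine hI.congr_fun ?_ measurableSet_Ioi
    intro x hx
    simp only [show (3:ℝ)-1 = ((2:ℕ):ℝ) by norm_num, show (1:ℝ)-1 = (0:ℝ) by norm_num,
      show (2:ℝ)-1 = (1:ℝ) by norm_num, Real.rpow_natCast, Real.rpow_zero, Real.rpow_one]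
    ring
  have hd : ∀ x ∈ Set.Ici (0:ℝ),
      HasDerivAt (fun u : ℝ => -((u ^ 2 + 1) * Real.exp (-u)))
        ((1 - x) ^ 2 * Real.exp (-x)) x := by
    intro x _
    have h1 : HasDerivAt (fun u : ℝ => u ^ 2 + 1) (2 * x) x := by
      simpa using (hasDerivAt_pow 2 x).add_const 1
    have h2 : HasDerivAt (fun u : ℝ => Real.exp (-u)) (-Real.exp (-x)) x := by
      simpa [Function.comp_def] using (Real.hasDerivAt_exp (-x)).comp x ((hasDerivAt_id x).neg)
    have := (h1.mul h2).neg
    exact this.congr_deriv (by ring)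
  have ht : Filter.Tendsto (fun u : ℝ => -((u ^ 2 + 1) * Real.exp (-u)))
      Filter.atTop (nhds 0) := by
    have h := ((tendsto_pow_mul_exp_neg_atTop_nhds_zero 2).add
      Real.tendsto_exp_neg_atTop_nhds_zero).neg
    have : -((0:ℝ) + 0) = 0 := by norm_num
    rw [this] at h
    refine h.congr fun u => ?_
    ring
  have := integral_Ioi_of_hasDerivAt_of_tendsto' hd hint ht
  rw [this]
  norm_num

theorem gev2_fisher_sigma_sigma (σ ξ : ℝ) (hσ : 0 < σ) (hξ : 0 < ξ) :
    ∫ x in Set.Ioi (0 : ℝ), (gev2ScoreSigma σ ξ x) ^ 2 * gev2Pdf σ ξ x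
      = 1 / (ξ * σ) ^ 2 := by
  have hσ' := hσ.ne'
  have hξ' := hξ.ne'
  set F : ℝ → ℝ := fun u => (1 / (ξ * σ)) ^ 2 * ((1 - u) ^ 2 * Real.exp (-u)) with hF
  set g : ℝ → ℝ := fun y =>
    (1 / (ξ * σ)) ^ 2 * (1 - y ^ (-1/ξ)) ^ 2 *
      ((1 / σ) * y ^ (-1 - 1/ξ) * Real.exp (-(y ^ (-1/ξ)))) with hg
  have hx : ∀ x : ℝ, (gev2ScoreSigma σ ξ x) ^ 2 * gev2Pdf σ ξ x = g (ξ / σ * x) := by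
    intro x
    have hb : ξ / σ * x = ξ * x / σ := by ring
    simp only [hg, gev2ScoreSigma, gev2Pdf, hb]
    ring
  simp only [hx]
  rw [integral_comp_mul_left_Ioi g 0 (div_pos hξ hσ), mul_zero]
  have hgy : ∀ y : ℝ, g y =
      (ξ / σ) * ((|(-1/ξ)| * y ^ ((-1/ξ) - 1)) • F (y ^ (-1/ξ))) := by
    intro y
    have habs : |(-1/ξ)| = 1/ξ := by
      rw [neg_div, abs_neg, abs_of_pos (by positivity)]
    rw [habs, show (-1/ξ) - 1 = -1 - 1/ξ by ring]
    simp only [hg, hF, smul_eq_mul]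
    field_simp
  have h2 : ∫ y in Set.Ioi (0:ℝ), g y
      = (ξ / σ) * ∫ y in Set.Ioi (0:ℝ), (|(-1/ξ)| * y ^ ((-1/ξ) - 1)) • F (y ^ (-1/ξ)) := by
    simp only [hgy]
    exact integral_const_mul _ _
  rw [h2, integral_comp_rpow_Ioi F (by positivity : (-1/ξ) ≠ 0)]
  have h3 : ∫ u in Set.Ioi (0:ℝ), F u = (1 / (ξ * σ)) ^ 2 := by
    simp only [hF]
    rw [integral_const_mul, gev2_aux_integral, mul_one]
  rw [h3]
  rw [smul_eq_mul]
  field_simp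
end

section
/- Let σ > 0 and ξ > 0. Then the Fisher information cross entry i_{σξ} of the GEV₂(σ,ξ) distribution satisfies ∫_0^∞ s_σ(x;σ,ξ) · s_ξ(x;σ,ξ) · f(x;σ,ξ) dx = −(1−γ)/(σξ²) − 1/(σξ³), where γ is the Euler–Mascheroni constant. -/
open MeasureTheory Real

/-- Score of the GEV₂ distribution with respect to the shape parameter ξ. -/
noncomputable def gev2ScoreXi (σ ξ x : ℝ) : ℝ :=
  (1 / ξ ^ 2) * (Real.log (ξ * x / σ) - 1) * (1 - (ξ * x / σ) ^ (-1 / ξ)) - 1 / ξ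

/-- `∫_0^∞ t^k e^{-t} dt` converges. -/
lemma gev2Aux.integrableOn_pow_exp (k : ℕ) :
    IntegrableOn (fun t : ℝ => t ^ k * Real.exp (-t)) (Set.Ioi 0) := by
  have h := Real.GammaIntegral_convergent (s := (k : ℝ) + 1) (by positivity)
  refine h.congr_fun (fun t ht => ?_) measurableSet_Ioi
  rw [add_sub_cancel_right]; beta_reduce; rw [Real.rpow_natCast, mul_comm]

/-- `∫_0^∞ t^k e^{-t} dt = k!`. -/
lemma gev2Aux.integral_pow_exp (k : ℕ) :
    ∫ t in Set.Ioi (0:ℝ), t ^ k * Real.exp (-t) = (Nat.factorial k : ℝ) := by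
  have h := Real.Gamma_eq_integral (s := (k : ℝ) + 1) (by positivity)
  have h2 : Real.Gamma ((k:ℝ) + 1) = (Nat.factorial k : ℝ) := Real.Gamma_nat_eq_factorial k
  rw [h2] at h
  rw [h]
  refine setIntegral_congr_fun measurableSet_Ioi (fun t ht => ?_)
  rw [add_sub_cancel_right, Real.rpow_natCast, mul_comm]

/-- A bound on `|log t|` for `t > 0`. -/
lemma gev2Aux.abs_log_le (t : ℝ) (ht : 0 < t) : |Real.log t| ≤ 2 * t ^ (-(1/2) : ℝ) + t := by
  have hlog : ∀ x : ℝ, 0 < x → Real.log x ≤ 2 * Real.sqrt x := by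
    intro x hx
    have h1 : Real.log x = 2 * Real.log (Real.sqrt x) := by
      rw [Real.log_sqrt hx.le]; ring
    rw [h1]
    have := Real.log_le_sub_one_of_pos (Real.sqrt_pos.mpr hx)
    nlinarith [Real.sqrt_nonneg x]
  rcases le_or_gt 1 t with h1 | h1
  · rw [abs_of_nonneg (Real.log_nonneg h1)]
    have : (0:ℝ) ≤ 2 * t ^ (-(1/2):ℝ) := by positivity
    linarith [Real.log_le_sub_one_of_pos ht]
  · rw [abs_of_nonpos (Real.log_nonpos ht.le h1.le)]
    have h2 : -Real.log t = Real.log (1/t) := by rw [Real.log_div one_ne_zero ht.ne']; simp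
    rw [h2]
    have h3 := hlog (1/t) (by positivity)
    have h4 : Real.sqrt (1/t) = t ^ (-(1/2):ℝ) := by
      rw [Real.sqrt_eq_rpow, one_div, ← Real.rpow_neg_one, ← Real.rpow_mul ht.le]
      norm_num
    rw [h4] at h3
    linarith

/-- `∫_0^∞ t^k (log t) e^{-t} dt` converges. -/
lemma gev2Aux.integrableOn_pow_log_exp (k : ℕ) :
    IntegrableOn (fun t : ℝ => t ^ k * Real.log t * Real.exp (-t)) (Set.Ioi 0) := by
  have hg1 := Real.GammaIntegral_convergent (s := (k : ℝ) + 1/2) (by positivity)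
  have hg2 := Real.GammaIntegral_convergent (s := (k : ℝ) + 2) (by positivity)
  have hmeas : AEStronglyMeasurable (fun t : ℝ => t ^ k * Real.log t * Real.exp (-t))
      (volume.restrict (Set.Ioi 0)) := by
    exact (((measurable_id.pow_const k).mul Real.measurable_log).mul
      (Real.measurable_exp.comp measurable_neg)).aestronglyMeasurable
  refine Integrable.mono ((hg1.const_mul 2).add hg2) hmeas ?_
  rw [ae_restrict_iff' measurableSet_Ioi]
  filter_upwards with t ht
  have ht' : (0:ℝ) < t := ht
  have he : (0:ℝ) < Real.exp (-t) := Real.exp_pos _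
  have htk : (0:ℝ) ≤ t ^ k := by positivity
  rw [Real.norm_eq_abs, Real.norm_eq_abs, abs_mul, abs_mul, abs_of_pos he,
    abs_of_nonneg htk]
  have hb := gev2Aux.abs_log_le t ht'
  have key : t ^ k * |Real.log t| * Real.exp (-t)
      ≤ (2 * (Real.exp (-t) * t ^ ((k:ℝ) + 1/2 - 1)) + Real.exp (-t) * t ^ ((k:ℝ) + 2 - 1)) := by
    have h1 : t ^ k * |Real.log t| ≤ 2 * t ^ ((k:ℝ) + 1/2 - 1) + t ^ ((k:ℝ) + 2 - 1) := by
      have e1 : t ^ ((k:ℝ) + 1/2 - 1) = t ^ k * t ^ (-(1/2):ℝ) := by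
        rw [← Real.rpow_natCast t k, ← Real.rpow_add ht']; ring_nf
      have e2 : t ^ ((k:ℝ) + 2 - 1) = t ^ k * t := by
        rw [show (k:ℝ) + 2 - 1 = (k:ℝ) + 1 by ring, Real.rpow_add ht', Real.rpow_one,
          Real.rpow_natCast]
      rw [e1, e2]
      nlinarith [mul_le_mul_of_nonneg_left hb htk]
    calc t ^ k * |Real.log t| * Real.exp (-t)
        ≤ (2 * t ^ ((k:ℝ) + 1/2 - 1) + t ^ ((k:ℝ) + 2 - 1)) * Real.exp (-t) :=
          mul_le_mul_of_nonneg_right h1 he.le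
      _ = _ := by ring
  calc t ^ k * |Real.log t| * Real.exp (-t) ≤ _ := key
    _ ≤ |2 * (Real.exp (-t) * t ^ ((k:ℝ) + 1/2 - 1)) + Real.exp (-t) * t ^ ((k:ℝ) + 2 - 1)| :=
        le_abs_self _

/-- `∫_0^∞ t^k (log t) e^{-t} dt = Γ'(k+1) = k! (-γ + H_k)`. -/
lemma gev2Aux.integral_pow_log_exp (k : ℕ) :
    ∫ t in Set.Ioi (0:ℝ), t ^ k * Real.log t * Real.exp (-t)
      = (Nat.factorial k : ℝ) * (-Real.eulerMascheroniConstant + harmonic k) := by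
  set J : ℝ := ∫ t in Set.Ioi (0:ℝ), t ^ k * Real.log t * Real.exp (-t) with hJ
  have hs : (0:ℝ) < ((k:ℂ) + 1).re := by simp; positivity
  have hC := Complex.hasDerivAt_GammaIntegral (s := (k:ℂ) + 1) hs
  have hint : (∫ t : ℝ in Set.Ioi 0, (t:ℂ) ^ ((k:ℂ) + 1 - 1) * (Real.log t * Real.exp (-t)))
      = (J : ℂ) := by
    rw [hJ]
    refine Eq.trans ?_ (integral_ofReal (𝕜 := ℂ)
      (f := fun t : ℝ => t ^ k * Real.log t * Real.exp (-t))
      (μ := volume.restrict (Set.Ioi 0)))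
    refine setIntegral_congr_fun measurableSet_Ioi (fun t ht => ?_)
    rw [RCLike.ofReal_alg, add_sub_cancel_right, Complex.cpow_natCast, Complex.real_smul,
      mul_one]
    push_cast
    ring
  rw [hint] at hC
  have hR : HasDerivAt (fun x : ℝ => (Complex.GammaIntegral x).re) J ((k:ℝ) + 1) := by
    have := HasDerivAt.real_of_complex (e := Complex.GammaIntegral) (e' := (J:ℂ)) (z := (k:ℝ)+1) ?_
    · simpa using this
    · convert hC using 2; push_cast; ring
  have heq : (fun x : ℝ => (Complex.GammaIntegral x).re) =ᶠ[nhds ((k:ℝ)+1)] Real.Gamma := by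
    have hmem : Set.Ioi (0:ℝ) ∈ nhds ((k:ℝ)+1) := Ioi_mem_nhds (by positivity)
    filter_upwards [hmem] with x hx
    rw [Real.Gamma, Complex.Gamma_eq_integral]
    simpa using hx
  have hR2 : HasDerivAt Real.Gamma J ((k:ℝ) + 1) := hR.congr_of_eventuallyEq heq.symm
  exact hR2.unique (Real.hasDerivAt_Gamma_nat k)

theorem gev2_fisher_sigma_xi (σ ξ : ℝ) (hσ : 0 < σ) (hξ : 0 < ξ) :
    ∫ x in Set.Ioi (0 : ℝ), gev2ScoreSigma σ ξ x * gev2ScoreXi σ ξ x * gev2Pdf σ ξ x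
      = -(1 - Real.eulerMascheroniConstant) / (σ * ξ ^ 2) - 1 / (σ * ξ ^ 3) := by
  have hξ0 : ξ ≠ 0 := hξ.ne'
  have hσ0 : σ ≠ 0 := hσ.ne'
  set F : ℝ → ℝ := fun x => gev2ScoreSigma σ ξ x * gev2ScoreXi σ ξ x * gev2Pdf σ ξ x with hF
  -- Step 1: scaling substitution x = (σ/ξ) y
  have h1 : ∫ x in Set.Ioi (0:ℝ), F ((σ/ξ) * x) = (σ/ξ)⁻¹ • ∫ x in Set.Ioi ((σ/ξ) * 0), F x :=
    integral_comp_mul_left_Ioi F 0 (by positivity)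
  rw [mul_zero] at h1
  have h1' : ∫ x in Set.Ioi (0:ℝ), F x = (σ/ξ) • ∫ x in Set.Ioi (0:ℝ), F ((σ/ξ) * x) := by
    rw [h1, smul_smul, mul_inv_cancel₀ (by positivity), one_smul]
  -- Step 2: power substitution y = t^(-ξ)
  have h2 : ∫ t in Set.Ioi (0:ℝ), (|(-ξ)| * t ^ ((-ξ) - 1)) • F ((σ/ξ) * t ^ (-ξ))
      = ∫ y in Set.Ioi (0:ℝ), F ((σ/ξ) * y) :=
    integral_comp_rpow_Ioi (fun y => F ((σ/ξ) * y)) (neg_ne_zero.mpr hξ0)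
  rw [h1', ← h2, smul_eq_mul, ← integral_const_mul]
  -- Step 3: pointwise identification with a linear combination of Gamma-type integrands
  have h3 : ∀ t ∈ Set.Ioi (0:ℝ),
      (σ/ξ) * ((|(-ξ)| * t ^ ((-ξ) - 1)) • F ((σ/ξ) * t ^ (-ξ)))
      = ((-1-ξ)/(σ*ξ^3)) * Real.exp (-t)
        + ((2+ξ)/(σ*ξ^3)) * (t ^ 1 * Real.exp (-t))
        + (-1/(σ*ξ^3)) * (t^2 * Real.exp (-t))
        + (-1/(σ*ξ^2)) * (t ^ 0 * Real.log t * Real.exp (-t))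
        + (2/(σ*ξ^2)) * (t ^ 1 * Real.log t * Real.exp (-t))
        + (-1/(σ*ξ^2)) * (t^2 * Real.log t * Real.exp (-t)) := by
    intro t ht
    have ht' : (0:ℝ) < t := ht
    have hyσ : ξ * ((σ/ξ) * t ^ (-ξ)) / σ = t ^ (-ξ) := by field_simp
    have hp1 : (t ^ (-ξ)) ^ (-1/ξ) = t := by
      rw [← Real.rpow_mul ht'.le]
      rw [show (-ξ) * (-1/ξ) = 1 by field_simp, Real.rpow_one]
    have hp2 : (t ^ (-ξ)) ^ (-1 - 1/ξ) = t ^ (ξ + 1) := by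
      rw [← Real.rpow_mul ht'.le]
      congr 1
      field_simp
      ring
    have hp3 : Real.log (t ^ (-ξ)) = -ξ * Real.log t := Real.log_rpow ht' _
    have hp4 : t ^ ((-ξ) - 1) = (t ^ (ξ + 1))⁻¹ := by
      rw [show (-ξ) - 1 = -(ξ+1) by ring, Real.rpow_neg ht'.le]
    have hu : (0:ℝ) < t ^ (ξ + 1) := Real.rpow_pos_of_pos ht' _
    rw [smul_eq_mul, hF]
    simp only []
    rw [gev2ScoreSigma, gev2ScoreXi, gev2Pdf, hyσ, hp1, hp2, hp3, hp4]
    rw [abs_of_neg (neg_neg_iff_pos.mpr hξ), neg_neg]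
    field_simp
    ring
  rw [setIntegral_congr_fun measurableSet_Ioi h3]
  -- Step 4: split the integral and evaluate each piece
  have j0 : IntegrableOn (fun t : ℝ => Real.exp (-t)) (Set.Ioi 0) := by
    simpa using gev2Aux.integrableOn_pow_exp 0
  have j1 : IntegrableOn (fun t : ℝ => t ^ 1 * Real.exp (-t)) (Set.Ioi 0) :=
    gev2Aux.integrableOn_pow_exp 1
  have j2 : IntegrableOn (fun t : ℝ => t ^ 2 * Real.exp (-t)) (Set.Ioi 0) :=
    gev2Aux.integrableOn_pow_exp 2
  have m0 : IntegrableOn (fun t : ℝ => t ^ 0 * Real.log t * Real.exp (-t)) (Set.Ioi 0) :=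
    gev2Aux.integrableOn_pow_log_exp 0
  have m1 : IntegrableOn (fun t : ℝ => t ^ 1 * Real.log t * Real.exp (-t)) (Set.Ioi 0) :=
    gev2Aux.integrableOn_pow_log_exp 1
  have m2 : IntegrableOn (fun t : ℝ => t ^ 2 * Real.log t * Real.exp (-t)) (Set.Ioi 0) :=
    gev2Aux.integrableOn_pow_log_exp 2
  have i1 := j0.const_mul ((-1-ξ)/(σ*ξ^3))
  have i2 := j1.const_mul ((2+ξ)/(σ*ξ^3))
  have i3 := j2.const_mul (-1/(σ*ξ^3))
  have i4 := m0.const_mul (-1/(σ*ξ^2))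
  have i5 := m1.const_mul (2/(σ*ξ^2))
  have i6 := m2.const_mul (-1/(σ*ξ^2))
  have s2 : Integrable (fun t : ℝ => ((-1-ξ)/(σ*ξ^3)) * Real.exp (-t)
      + ((2+ξ)/(σ*ξ^3)) * (t ^ 1 * Real.exp (-t))) (volume.restrict (Set.Ioi 0)) := i1.add i2
  have s3 : Integrable (fun t : ℝ => ((-1-ξ)/(σ*ξ^3)) * Real.exp (-t)
      + ((2+ξ)/(σ*ξ^3)) * (t ^ 1 * Real.exp (-t))
      + (-1/(σ*ξ^3)) * (t^2 * Real.exp (-t))) (volume.restrict (Set.Ioi 0)) := s2.add i3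
  have s4 : Integrable (fun t : ℝ => ((-1-ξ)/(σ*ξ^3)) * Real.exp (-t)
      + ((2+ξ)/(σ*ξ^3)) * (t ^ 1 * Real.exp (-t))
      + (-1/(σ*ξ^3)) * (t^2 * Real.exp (-t))
      + (-1/(σ*ξ^2)) * (t ^ 0 * Real.log t * Real.exp (-t)))
      (volume.restrict (Set.Ioi 0)) := s3.add i4
  have s5 : Integrable (fun t : ℝ => ((-1-ξ)/(σ*ξ^3)) * Real.exp (-t)
      + ((2+ξ)/(σ*ξ^3)) * (t ^ 1 * Real.exp (-t))
      + (-1/(σ*ξ^3)) * (t^2 * Real.exp (-t))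
      + (-1/(σ*ξ^2)) * (t ^ 0 * Real.log t * Real.exp (-t))
      + (2/(σ*ξ^2)) * (t ^ 1 * Real.log t * Real.exp (-t)))
      (volume.restrict (Set.Ioi 0)) := s4.add i5
  rw [integral_add s5 i6, integral_add s4 i5, integral_add s3 i4, integral_add s2 i3,
    integral_add i1 i2]
  simp only [integral_const_mul]
  have e0 : ∫ t in Set.Ioi (0:ℝ), Real.exp (-t) = 1 := by
    simpa using gev2Aux.integral_pow_exp 0
  have e1 : ∫ t in Set.Ioi (0:ℝ), t ^ 1 * Real.exp (-t) = 1 := by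
    simpa using gev2Aux.integral_pow_exp 1
  have e2 : ∫ t in Set.Ioi (0:ℝ), t ^ 2 * Real.exp (-t) = 2 := by
    have := gev2Aux.integral_pow_exp 2
    norm_num [Nat.factorial] at this
    simpa using this
  have l0 : ∫ t in Set.Ioi (0:ℝ), t ^ 0 * Real.log t * Real.exp (-t)
      = -Real.eulerMascheroniConstant := by
    have := gev2Aux.integral_pow_log_exp 0
    norm_num [harmonic_zero] at this
    simpa using this
  have l1 : ∫ t in Set.Ioi (0:ℝ), t ^ 1 * Real.log t * Real.exp (-t)
      = 1 - Real.eulerMascheroniConstant := by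
    have := gev2Aux.integral_pow_log_exp 1
    norm_num [harmonic_succ, harmonic_zero] at this
    simp only [pow_one]
    rw [this]; ring
  have l2 : ∫ t in Set.Ioi (0:ℝ), t ^ 2 * Real.log t * Real.exp (-t)
      = 3 - 2 * Real.eulerMascheroniConstant := by
    have := gev2Aux.integral_pow_log_exp 2
    norm_num [harmonic_succ, harmonic_zero, Nat.factorial] at this
    rw [this]; ring
  rw [e0, e1, e2, l0, l1, l2]
  field_simp
  ring
end

section
/- (Orthogonality of the GEV₂ reparametrisation with transformed scale parameter σ̃(ρ,ξ) = C(ρ)·ξ·exp((1−γ)ξ).) For all σ > 0 and ξ > 0, ∫_0^∞ s_σ(x;σ,ξ) · ( σ·((1−γ) + 1/ξ)·s_σ(x;σ,ξ) + s_ξ(x;σ,ξ) ) · f(x;σ,ξ) dx = 0, where γ is the Euler–Mascheroni constant. Equivalently, the Fisher cross-information between the new parameters ρ and ξ vanishes, since the score in ρ is proportional to s_σ and the score in ξ under the reparametrisation is (∂σ̃/∂ξ)·s_σ + s_ξ = σ̃·((1−γ)+1/ξ)·s_σ + s_ξ by the chain rule. -/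
open MeasureTheory Real

section AuxGamma

open Set Filter Topology

lemma integrableOn_pow_mul_exp (n : ℕ) :
    IntegrableOn (fun t : ℝ => t ^ n * Real.exp (-t)) (Set.Ioi 0) := by
  have h := Real.GammaIntegral_convergent (s := (n : ℝ) + 1) (by positivity)
  refine h.congr_fun (fun t ht => ?_) measurableSet_Ioi
  beta_reduce
  rw [show ((n : ℝ) + 1 - 1) = (n : ℝ) by ring, Real.rpow_natCast]
  ring

lemma integral_pow_mul_exp (n : ℕ) :
    ∫ t in Set.Ioi (0:ℝ), t ^ n * Real.exp (-t) = (Nat.factorial n : ℝ) := by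
  rw [← Real.Gamma_nat_eq_factorial,
    Real.Gamma_eq_integral (by positivity : (0:ℝ) < (n:ℝ) + 1)]
  refine setIntegral_congr_fun measurableSet_Ioi (fun t ht => ?_)
  rw [show ((n : ℝ) + 1 - 1) = (n : ℝ) by ring, Real.rpow_natCast]
  ring

lemma mellinConv_log {s : ℂ} (hs : 0 < s.re) :
    MellinConvergent (fun t => Real.log t • ((Real.exp (-t) : ℝ) : ℂ)) s := by
  refine (mellin_hasDerivAt_of_isBigO_rpow (a := s.re + 1) (b := 0)
    ?_ ?_ (lt_add_one _) ?_ hs).1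
  · refine (Continuous.continuousOn ?_).locallyIntegrableOn measurableSet_Ioi
    exact Complex.continuous_ofReal.comp (Real.continuous_exp.comp continuous_neg)
  · rw [← Asymptotics.isBigO_norm_left]
    simp_rw [Complex.norm_real,
      Asymptotics.isBigO_norm_left]
    simpa only [neg_one_mul] using
      (isLittleO_exp_neg_mul_rpow_atTop zero_lt_one _).isBigO
  · simp_rw [neg_zero, Real.rpow_zero]
    refine Asymptotics.isBigO_const_of_tendsto (?_ : Tendsto _ _ (nhds (1 : ℂ))) one_ne_zero
    rw [(by simp : (1 : ℂ) = ((Real.exp (-0) : ℝ) : ℂ))]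
    exact (Complex.continuous_ofReal.comp
      (Real.continuous_exp.comp continuous_neg)).continuousWithinAt

lemma integrableOn_pow_mul_log_exp (n : ℕ) :
    IntegrableOn (fun t : ℝ => t ^ n * Real.log t * Real.exp (-t)) (Set.Ioi 0) := by
  have h := mellinConv_log (s := (n : ℂ) + 1) (by simp; positivity)
  have h2 : IntegrableOn
      (fun t : ℝ => ((t ^ n * Real.log t * Real.exp (-t) : ℝ) : ℂ)) (Set.Ioi 0) := by
    refine h.congr_fun (fun t ht => ?_) measurableSet_Ioi
    beta_reduce
    rw [add_sub_cancel_right, Complex.cpow_natCast]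
    push_cast
    simp [smul_eq_mul]
    ring
  have h3 := h2.re
  refine (integrableOn_congr_fun (fun t ht => ?_) measurableSet_Ioi).mp h3
  rw [RCLike.re_to_complex, Complex.ofReal_re]

lemma integral_pow_mul_log_exp (n : ℕ) :
    ∫ t in Set.Ioi (0:ℝ), t ^ n * Real.log t * Real.exp (-t)
      = (Nat.factorial n : ℝ) * (-Real.eulerMascheroniConstant + harmonic n) := by
  have h1 := Complex.hasDerivAt_GammaIntegral (s := (n : ℂ) + 1) (by simp; positivity)
  have hmem : {s : ℂ | 0 < s.re} ∈ nhds ((n:ℂ)+1) :=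
    (isOpen_lt continuous_const Complex.continuous_re).mem_nhds (by simp; positivity)
  have heq : Complex.Gamma =ᶠ[nhds ((n:ℂ)+1)] Complex.GammaIntegral := by
    filter_upwards [hmem] with s hs
    exact Complex.Gamma_eq_integral hs
  have h2 : HasDerivAt Complex.Gamma
      (∫ t : ℝ in Set.Ioi 0, (t:ℂ) ^ ((n:ℂ)+1-1) * (Real.log t * Real.exp (-t))) ((n:ℂ)+1) :=
    h1.congr_of_eventuallyEq heq
  have h3 := Complex.hasDerivAt_Gamma_nat n
  have h4 := h2.unique (by exact_mod_cast h3)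
  have h5 : (∫ t : ℝ in Set.Ioi 0, (t:ℂ) ^ ((n:ℂ)+1-1) * (Real.log t * Real.exp (-t)))
      = ∫ t : ℝ in Set.Ioi 0, ((t ^ n * Real.log t * Real.exp (-t) : ℝ) : ℂ) := by
    refine setIntegral_congr_fun measurableSet_Ioi (fun t ht => ?_)
    rw [add_sub_cancel_right, Complex.cpow_natCast]
    push_cast
    ring
  rw [h5, show (∫ t : ℝ in Set.Ioi 0, ((t ^ n * Real.log t * Real.exp (-t) : ℝ) : ℂ))
      = ((∫ t in Set.Ioi (0:ℝ), t ^ n * Real.log t * Real.exp (-t) : ℝ) : ℂ)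
    from integral_ofReal] at h4
  exact_mod_cast h4

end AuxGamma

theorem gev2_orthogonal_scale_reparam (σ ξ : ℝ) (hσ : 0 < σ) (hξ : 0 < ξ) :
    ∫ x in Set.Ioi (0 : ℝ),
        gev2ScoreSigma σ ξ x *
          (σ * ((1 - Real.eulerMascheroniConstant) + 1 / ξ) * gev2ScoreSigma σ ξ x
            + gev2ScoreXi σ ξ x) * gev2Pdf σ ξ x = 0 := by
  have hξ0 : ξ ≠ 0 := hξ.ne'
  have hσ0 : σ ≠ 0 := hσ.ne'
  set γ := Real.eulerMascheroniConstant with hγdef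
  set b : ℝ := σ / ξ with hb
  have hbpos : 0 < b := div_pos hσ hξ
  set G : ℝ → ℝ := fun x => gev2ScoreSigma σ ξ x *
      (σ * ((1 - γ) + 1/ξ) * gev2ScoreSigma σ ξ x + gev2ScoreXi σ ξ x) * gev2Pdf σ ξ x
    with hG
  set K : ℝ → ℝ := fun y =>
      (1/(ξ^2*σ)) * (((1-y)^2*((1 - γ) - Real.log y) - (1-y)) * Real.exp (-y)) with hK
  -- Step 1: scaling substitution
  have step1 : ∫ x in Set.Ioi (0:ℝ), G x = b * ∫ u in Set.Ioi (0:ℝ), G (b*u) := by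
    rw [integral_comp_mul_left_Ioi G 0 hbpos, mul_zero, smul_eq_mul, ← mul_assoc,
      mul_inv_cancel₀ hbpos.ne', one_mul]
  -- Step 2: power substitution u = y ^ (-ξ)
  have step2 : (∫ u in Set.Ioi (0:ℝ), G (b*u))
      = ∫ y in Set.Ioi (0:ℝ), (|(-ξ)| * y ^ ((-ξ) - 1)) • G (b * y ^ (-ξ)) :=
    (integral_comp_rpow_Ioi (fun u => G (b*u)) (neg_ne_zero.mpr hξ0)).symm
  -- pointwise identification with K
  have hpt : ∀ y ∈ Set.Ioi (0:ℝ),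
      (|(-ξ)| * y ^ ((-ξ) - 1)) • G (b * y ^ (-ξ)) = b⁻¹ * K y := by
    intro y hy
    have hy0 : (0:ℝ) < y := hy
    have habs : |(-ξ)| = ξ := by rw [abs_neg, abs_of_pos hξ]
    have harg : ξ * (b * y ^ (-ξ)) / σ = y ^ (-ξ) := by
      rw [hb]; field_simp
    have e2 : (y ^ (-ξ)) ^ (-1/ξ : ℝ) = y := by
      rw [← Real.rpow_mul hy0.le, show -ξ * (-1/ξ) = 1 by field_simp, Real.rpow_one]
    have e3 : (y ^ (-ξ)) ^ (-1 - 1/ξ : ℝ) = y ^ (ξ+1) := by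
      rw [← Real.rpow_mul hy0.le]
      congr 1
      field_simp
      ring
    have e4 : Real.log (y ^ (-ξ)) = -ξ * Real.log y := Real.log_rpow hy0 _
    have e5 : y ^ (-ξ - 1) = (y ^ (ξ+1))⁻¹ := by
      rw [← Real.rpow_neg hy0.le]
      congr 1
      ring
    have hyp : (0:ℝ) < y ^ (ξ+1) := Real.rpow_pos_of_pos hy0 _
    rw [habs, smul_eq_mul, hG]
    simp only [gev2ScoreSigma, gev2ScoreXi, gev2Pdf, harg]
    simp only [e2, e3, e4, e5, hK, hb]
    field_simp
    ring
  have step3 : (∫ y in Set.Ioi (0:ℝ), (|(-ξ)| * y ^ ((-ξ) - 1)) • G (b * y ^ (-ξ)))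
      = b⁻¹ * ∫ y in Set.Ioi (0:ℝ), K y := by
    rw [setIntegral_congr_fun measurableSet_Ioi hpt, integral_const_mul]
  have hKzero : ∫ y in Set.Ioi (0:ℝ), K y = 0 := by
    have hrw : ∀ y ∈ Set.Ioi (0:ℝ), K y = (1/(ξ^2*σ)) *
        ((-γ) * (y^0 * Real.exp (-y)) + ((2*γ-1) * (y^1 * Real.exp (-y))
          + ((1-γ) * (y^2 * Real.exp (-y)) + ((-1) * (y^0 * Real.log y * Real.exp (-y))
          + (2 * (y^1 * Real.log y * Real.exp (-y))
          + (-1) * (y^2 * Real.log y * Real.exp (-y))))))) := by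
      intro y hy
      simp only [hK]
      ring
    rw [setIntegral_congr_fun measurableSet_Ioi hrw, integral_const_mul]
    have i0 := integrableOn_pow_mul_exp 0
    have i1 := integrableOn_pow_mul_exp 1
    have i2 := integrableOn_pow_mul_exp 2
    have j0 := integrableOn_pow_mul_log_exp 0
    have j1 := integrableOn_pow_mul_log_exp 1
    have j2 := integrableOn_pow_mul_log_exp 2
    have t2 : IntegrableOn (fun x : ℝ => 2 * (x^1 * Real.log x * Real.exp (-x))
        + -1 * (x^2 * Real.log x * Real.exp (-x))) (Set.Ioi 0) :=
      (j1.const_mul 2).add (j2.const_mul (-1))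
    have t3 : IntegrableOn (fun x : ℝ => -1 * (x^0 * Real.log x * Real.exp (-x))
        + (2 * (x^1 * Real.log x * Real.exp (-x))
          + -1 * (x^2 * Real.log x * Real.exp (-x)))) (Set.Ioi 0) :=
      (j0.const_mul (-1)).add t2
    have t4 : IntegrableOn (fun x : ℝ => (1-γ) * (x^2 * Real.exp (-x))
        + (-1 * (x^0 * Real.log x * Real.exp (-x))
          + (2 * (x^1 * Real.log x * Real.exp (-x))
          + -1 * (x^2 * Real.log x * Real.exp (-x))))) (Set.Ioi 0) :=
      (i2.const_mul (1-γ)).add t3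
    have t5 : IntegrableOn (fun x : ℝ => (2*γ-1) * (x^1 * Real.exp (-x))
        + ((1-γ) * (x^2 * Real.exp (-x))
          + (-1 * (x^0 * Real.log x * Real.exp (-x))
          + (2 * (x^1 * Real.log x * Real.exp (-x))
          + -1 * (x^2 * Real.log x * Real.exp (-x)))))) (Set.Ioi 0) :=
      (i1.const_mul (2*γ-1)).add t4
    rw [integral_add (i0.const_mul (-γ)) t5,
      integral_add (i1.const_mul (2*γ-1)) t4,
      integral_add (i2.const_mul (1-γ)) t3,
      integral_add (j0.const_mul (-1)) t2,
      integral_add (j1.const_mul 2) (j2.const_mul (-1))]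
    simp only [integral_const_mul, integral_pow_mul_exp, integral_pow_mul_log_exp, hγdef]
    push_cast [harmonic_succ, harmonic_zero, Nat.factorial]
    ring
  rw [step1, step2, step3, hKzero]
  ring
end

section
/- Let σ > 0 and ξ > 0. Then the Fisher information entry i_{ξξ} of the GP(σ,ξ) distribution satisfies ∫_0^∞ (s_ξ(x;σ,ξ))² · f(x;σ,ξ) dx = 2/((1+ξ)(1+2ξ)). -/
open MeasureTheory Real

/-- Density of the two-parameter Generalised Pareto distribution GP(σ,ξ), for x > 0. -/
noncomputable def gpPdf (σ ξ x : ℝ) : ℝ :=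
  (1 / σ) * (1 + ξ * x / σ) ^ (-1 - 1 / ξ)

/-- Score of the GP distribution with respect to the shape parameter ξ. -/
noncomputable def gpScoreXi (σ ξ x : ℝ) : ℝ :=
  (1 / ξ ^ 2) * Real.log (1 + ξ * x / σ) - (1 + 1 / ξ) * x / (σ + ξ * x)

section GPFisherAux

/-- Explicit antiderivative of the ξξ-Fisher integrand of the GP distribution. -/
noncomputable def gpF (σ ξ x : ℝ) : ℝ :=
  ((1 + ξ * x / σ) ^ (-1/ξ) *
      (-(Real.log (1 + ξ * x / σ)) ^ 2 + 2 * Real.log (1 + ξ * x / σ) - 1 - ξ ^ 2)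
    + (1 + ξ * x / σ) ^ (-1/ξ - 1) *
      (-2 * Real.log (1 + ξ * x / σ) - 2 * ξ / (1 + ξ) + 2 + 2 * ξ)
    - (1 + ξ * x / σ) ^ (-1/ξ - 2) * ((1 + ξ) ^ 2 / (1 + 2 * ξ))) / ξ ^ 4

/-- The antiderivative expressed in the variable `t = log (1 + ξx/σ)`. -/
noncomputable def gpG (ξ t : ℝ) : ℝ :=
  ((-1) * (Real.exp (-(1/ξ * t)) * t ^ 2) + 2 * (Real.exp (-(1/ξ * t)) * t ^ 1)
    + (-1 - ξ ^ 2) * (Real.exp (-(1/ξ * t)) * t ^ 0)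
    + (-2) * (Real.exp (-((1/ξ + 1) * t)) * t ^ 1)
    + (-(2 * ξ / (1 + ξ)) + 2 + 2 * ξ) * (Real.exp (-((1/ξ + 1) * t)) * t ^ 0)
    + (-((1 + ξ) ^ 2 / (1 + 2 * ξ))) * (Real.exp (-((1/ξ + 2) * t)) * t ^ 0)) / ξ ^ 4

open Filter Topology

lemma gpF_hasDeriv (σ ξ : ℝ) (hσ : 0 < σ) (hξ : 0 < ξ) (x : ℝ) (hx : 0 ≤ x) :
    HasDerivAt (gpF σ ξ) (gpScoreXi σ ξ x ^ 2 * gpPdf σ ξ x) x := by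
  have hu : 0 < 1 + ξ * x / σ := by positivity
  have hv : HasDerivAt (fun x : ℝ => 1 + ξ * x / σ) (ξ / σ) x := by
    simpa using (((hasDerivAt_id x).const_mul ξ).div_const σ).const_add 1
  have hL : HasDerivAt (fun x : ℝ => Real.log (1 + ξ * x / σ))
      (ξ / σ / (1 + ξ * x / σ)) x := hv.log hu.ne'
  have hp : ∀ p : ℝ, HasDerivAt (fun x : ℝ => (1 + ξ * x / σ) ^ p)
      (ξ / σ * p * (1 + ξ * x / σ) ^ (p - 1)) x := fun p => hv.rpow_const (Or.inl hu.ne')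
  have h1 : HasDerivAt (fun x : ℝ =>
      -(Real.log (1 + ξ * x / σ)) ^ 2 + 2 * Real.log (1 + ξ * x / σ) - 1 - ξ ^ 2)
      (-(2 * Real.log (1 + ξ * x / σ) ^ 1 * (ξ / σ / (1 + ξ * x / σ)))
        + 2 * (ξ / σ / (1 + ξ * x / σ))) x :=
    (((hL.pow 2).neg.add (hL.const_mul 2)).sub_const 1).sub_const (ξ ^ 2)
  have h2 : HasDerivAt (fun x : ℝ =>
      -2 * Real.log (1 + ξ * x / σ) - 2 * ξ / (1 + ξ) + 2 + 2 * ξ)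
      (-2 * (ξ / σ / (1 + ξ * x / σ))) x :=
    (((hL.const_mul (-2)).sub_const _).add_const 2).add_const (2 * ξ)
  have H := ((((hp (-1/ξ)).mul h1).add ((hp (-1/ξ - 1)).mul h2)).sub
      (((hp (-1/ξ - 2)).mul_const ((1 + ξ) ^ 2 / (1 + 2 * ξ))))).div_const (ξ ^ 4)
  have hfun : gpF σ ξ = fun x : ℝ =>
      ((1 + ξ * x / σ) ^ (-1/ξ) *
        (-(Real.log (1 + ξ * x / σ)) ^ 2 + 2 * Real.log (1 + ξ * x / σ) - 1 - ξ ^ 2)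
      + (1 + ξ * x / σ) ^ (-1/ξ - 1) *
        (-2 * Real.log (1 + ξ * x / σ) - 2 * ξ / (1 + ξ) + 2 + 2 * ξ)
      - (1 + ξ * x / σ) ^ (-1/ξ - 2) * ((1 + ξ) ^ 2 / (1 + 2 * ξ))) / ξ ^ 4 := rfl
  rw [hfun]
  refine H.congr_deriv ?_
  have hA1 : (1 + ξ * x / σ) ^ (-1/ξ - 1) = (1 + ξ * x / σ) ^ (-1/ξ) / (1 + ξ * x / σ) := by
    rw [rpow_sub hu, rpow_one]
  have hA1' : (1 + ξ * x / σ) ^ (-1/ξ - 1 - 1)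
      = (1 + ξ * x / σ) ^ (-1/ξ) / (1 + ξ * x / σ) ^ 2 := by
    rw [show (-1/ξ - 1 - 1) = -1/ξ - ((2:ℕ):ℝ) by push_cast; ring, rpow_sub hu, rpow_natCast]
  have hA2' : (1 + ξ * x / σ) ^ (-1/ξ - 2 - 1)
      = (1 + ξ * x / σ) ^ (-1/ξ) / (1 + ξ * x / σ) ^ 3 := by
    rw [show (-1/ξ - 2 - 1) = -1/ξ - ((3:ℕ):ℝ) by push_cast; ring, rpow_sub hu, rpow_natCast]
  have hA0 : (1 + ξ * x / σ) ^ (-1 - 1/ξ) = (1 + ξ * x / σ) ^ (-1/ξ) / (1 + ξ * x / σ) := by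
    rw [show (-1 - 1/ξ) = -1/ξ - 1 by ring, rpow_sub hu, rpow_one]
  have hsx : σ + ξ * x = σ * (1 + ξ * x / σ) := by field_simp
  have h1ξ : (1:ℝ) + ξ ≠ 0 := by positivity
  have h2ξ : (1:ℝ) + 2 * ξ ≠ 0 := by positivity
  rw [gpScoreXi, gpPdf, show (-1 - 1 / ξ : ℝ) = -1 - 1/ξ by norm_num, hsx, hA0, hA1, hA1', hA2']
  field_simp
  ring

lemma aux_exp (b : ℝ) (hb : 0 < b) (n : ℕ) :
    Tendsto (fun L : ℝ => Real.exp (-(b * L)) * L ^ n) atTop (𝓝 0) := by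
  have h := (tendsto_pow_mul_exp_neg_atTop_nhds_zero n).comp
    (tendsto_id.const_mul_atTop hb)
  have h2 : Tendsto (fun L : ℝ => (1/b^n) * ((b * L) ^ n * Real.exp (-(b * L)))) atTop (𝓝 0) := by
    simpa [Function.comp] using h.const_mul (1/b^n)
  refine h2.congr fun L => ?_
  have hbn : b ^ n ≠ 0 := pow_ne_zero _ hb.ne'
  field_simp [mul_pow]
  ring

lemma gpG_tendsto (ξ : ℝ) (hξ : 0 < ξ) : Tendsto (gpG ξ) atTop (𝓝 0) := by
  have b1 : (0:ℝ) < 1/ξ := by positivity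
  have b2 : (0:ℝ) < 1/ξ + 1 := by positivity
  have b3 : (0:ℝ) < 1/ξ + 2 := by positivity
  have t1 : Tendsto (fun t : ℝ => (-1 : ℝ) * (rexp (-(1/ξ * t)) * t ^ 2)) atTop (𝓝 0) := by
    simpa using (aux_exp _ b1 2).const_mul (-1 : ℝ)
  have t2 : Tendsto (fun t : ℝ => (2 : ℝ) * (rexp (-(1/ξ * t)) * t ^ 1)) atTop (𝓝 0) := by
    simpa using (aux_exp _ b1 1).const_mul (2 : ℝ)
  have t3 : Tendsto (fun t : ℝ => (-1 - ξ ^ 2) * (rexp (-(1/ξ * t)) * t ^ 0)) atTop (𝓝 0) := by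
    simpa using (aux_exp _ b1 0).const_mul (-1 - ξ ^ 2)
  have t4 : Tendsto (fun t : ℝ => (-2 : ℝ) * (rexp (-((1/ξ + 1) * t)) * t ^ 1)) atTop (𝓝 0) := by
    simpa using (aux_exp _ b2 1).const_mul (-2 : ℝ)
  have t5 : Tendsto (fun t : ℝ =>
      (-(2 * ξ / (1 + ξ)) + 2 + 2 * ξ) * (rexp (-((1/ξ + 1) * t)) * t ^ 0)) atTop (𝓝 0) := by
    simpa using (aux_exp _ b2 0).const_mul (-(2 * ξ / (1 + ξ)) + 2 + 2 * ξ)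
  have t6 : Tendsto (fun t : ℝ =>
      (-((1 + ξ) ^ 2 / (1 + 2 * ξ))) * (rexp (-((1/ξ + 2) * t)) * t ^ 0)) atTop (𝓝 0) := by
    simpa using (aux_exp _ b3 0).const_mul (-((1 + ξ) ^ 2 / (1 + 2 * ξ)))
  have s : Tendsto (fun t : ℝ =>
      ((-1) * (rexp (-(1/ξ * t)) * t ^ 2) + 2 * (rexp (-(1/ξ * t)) * t ^ 1)
      + (-1 - ξ ^ 2) * (rexp (-(1/ξ * t)) * t ^ 0)
      + (-2) * (rexp (-((1/ξ + 1) * t)) * t ^ 1)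
      + (-(2 * ξ / (1 + ξ)) + 2 + 2 * ξ) * (rexp (-((1/ξ + 1) * t)) * t ^ 0)
      + (-((1 + ξ) ^ 2 / (1 + 2 * ξ))) * (rexp (-((1/ξ + 2) * t)) * t ^ 0))) atTop (𝓝 0) := by
    simpa using ((((t1.add t2).add t3).add t4).add t5).add t6
  have s2 := s.div_const (ξ ^ 4)
  rw [zero_div] at s2
  exact s2.congr fun t => by rw [gpG]

lemma gpF_tendsto (σ ξ : ℝ) (hσ : 0 < σ) (hξ : 0 < ξ) :
    Tendsto (gpF σ ξ) atTop (𝓝 0) := by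
  have hinner : Tendsto (fun x : ℝ => 1 + ξ * x / σ) atTop atTop := by
    apply tendsto_atTop_add_const_left
    exact (tendsto_id.atTop_mul_const (div_pos hξ hσ)).congr fun x => by simp only [id_eq]; ring
  have hlog : Tendsto (fun x : ℝ => Real.log (1 + ξ * x / σ)) atTop atTop :=
    tendsto_log_atTop.comp hinner
  have hcomp := (gpG_tendsto ξ hξ).comp hlog
  refine hcomp.congr' ?_
  filter_upwards [eventually_ge_atTop (0:ℝ)] with x hx
  have hu : 0 < 1 + ξ * x / σ := by positivity
  have e1 : (1 + ξ * x / σ) ^ (-1/ξ) = rexp (-(1/ξ * Real.log (1 + ξ * x / σ))) := by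
    rw [rpow_def_of_pos hu]; ring_nf
  have e2 : (1 + ξ * x / σ) ^ (-1/ξ - 1) = rexp (-((1/ξ + 1) * Real.log (1 + ξ * x / σ))) := by
    rw [rpow_def_of_pos hu]; ring_nf
  have e3 : (1 + ξ * x / σ) ^ (-1/ξ - 2) = rexp (-((1/ξ + 2) * Real.log (1 + ξ * x / σ))) := by
    rw [rpow_def_of_pos hu]; ring_nf
  show gpG ξ (Real.log (1 + ξ * x / σ)) = gpF σ ξ x
  rw [gpG, gpF, e1, e2, e3]
  ring

lemma gpF_zero (σ ξ : ℝ) (hσ : 0 < σ) (hξ : 0 < ξ) :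
    gpF σ ξ 0 = -(2 / ((1 + ξ) * (1 + 2 * ξ))) := by
  have h1ξ : (1:ℝ) + ξ ≠ 0 := by positivity
  have h2ξ : (1:ℝ) + 2 * ξ ≠ 0 := by positivity
  rw [gpF]
  simp only [mul_zero, zero_div, add_zero, Real.one_rpow, Real.log_one]
  field_simp
  ring

end GPFisherAux

theorem gp_fisher_xi_xi (σ ξ : ℝ) (hσ : 0 < σ) (hξ : 0 < ξ) :
    ∫ x in Set.Ioi (0 : ℝ), (gpScoreXi σ ξ x) ^ 2 * gpPdf σ ξ x
      = 2 / ((1 + ξ) * (1 + 2 * ξ)) := by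
  have key := integral_Ioi_of_hasDerivAt_of_nonneg'
    (g := gpF σ ξ) (g' := fun x => gpScoreXi σ ξ x ^ 2 * gpPdf σ ξ x) (a := 0)
    (fun x hx => gpF_hasDeriv σ ξ hσ hξ x hx)
    (fun x hx => by
      have hu : 0 < 1 + ξ * x / σ := by
        have : 0 < x := hx
        positivity
      exact mul_nonneg (sq_nonneg _)
        (mul_nonneg (by positivity) (Real.rpow_pos_of_pos hu _).le))
    (gpF_tendsto σ ξ hσ hξ)
  rw [key, gpF_zero σ ξ hσ hξ]
  ring
end

section
/- (Orthogonality of the GP reparametrisation with transformed scale parameter σ̃(ν,ξ) = C₃(ν)/(ξ+1).) For all σ > 0 and ξ > 0, ∫_0^∞ s_σ(x;σ,ξ) · ( −(σ/(1+ξ))·s_σ(x;σ,ξ) + s_ξ(x;σ,ξ) ) · f(x;σ,ξ) dx = 0. Equivalently, the Fisher cross-information between the new parameters ν and ξ vanishes, since the score in ν is proportional to s_σ and the score in ξ under the reparametrisation is (∂σ̃/∂ξ)·s_σ + s_ξ = −(σ̃/(1+ξ))·s_σ + s_ξ by the chain rule. -/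
open MeasureTheory Real Filter

/-- Score of the GP distribution with respect to the scale parameter σ. -/
noncomputable def gpScoreSigma (σ ξ x : ℝ) : ℝ :=
  -1 / σ + (1 + ξ) * x / (σ * (σ + ξ * x))

/-! ### Auxiliary functions for the proof -/

noncomputable def gpU (σ ξ x : ℝ) : ℝ := 1 + ξ * x / σ
noncomputable def gpA (σ ξ x : ℝ) : ℝ := gpU σ ξ x ^ (-1 - 1 / ξ)
noncomputable def gpL (σ ξ x : ℝ) : ℝ := Real.log (gpU σ ξ x)

/-- positive part of the integrand -/
noncomputable def gpP (σ ξ x : ℝ) : ℝ :=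
  1 / (σ ^ 2 * ξ ^ 3) * gpA σ ξ x *
    ((2 + 5 * ξ + ξ ^ 2) * (gpU σ ξ x)⁻¹ + gpL σ ξ x)

/-- negative part of the integrand -/
noncomputable def gpN (σ ξ x : ℝ) : ℝ :=
  1 / (σ ^ 2 * ξ ^ 3) * gpA σ ξ x *
    ((ξ / (1 + ξ) + (1 + ξ)) + (1 + ξ) * (1 + 2 * ξ) * ((gpU σ ξ x)⁻¹) ^ 2 +
      (1 + ξ) * (gpU σ ξ x)⁻¹ * gpL σ ξ x)

/-- antiderivative of `gpP` -/
noncomputable def gpFp (σ ξ x : ℝ) : ℝ :=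
  σ * (1 / (σ ^ 2 * ξ ^ 3)) / ξ *
    (-((2 + 5 * ξ + ξ ^ 2) * ξ / (1 + ξ)) * gpA σ ξ x -
      ξ * (gpA σ ξ x * (gpU σ ξ x * gpL σ ξ x)) - ξ ^ 2 * (gpA σ ξ x * gpU σ ξ x))

/-- antiderivative of `gpN` -/
noncomputable def gpFn (σ ξ x : ℝ) : ℝ :=
  σ * (1 / (σ ^ 2 * ξ ^ 3)) / ξ *
    (-((ξ / (1 + ξ) + (1 + ξ)) * ξ) * (gpA σ ξ x * gpU σ ξ x) -
      ((1 + ξ) * (1 + 2 * ξ) * ξ / (1 + 2 * ξ)) * (gpA σ ξ x * (gpU σ ξ x)⁻¹) -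
      ξ * (gpA σ ξ x * gpL σ ξ x) - ξ ^ 2 / (1 + ξ) * gpA σ ξ x)

section aux
variable {σ ξ : ℝ} (hσ : 0 < σ) (hξ : 0 < ξ)

lemma gpU_hasDerivAt (x : ℝ) : HasDerivAt (gpU σ ξ) (ξ / σ) x := by
  show HasDerivAt (fun x => 1 + ξ * x / σ) _ x
  simpa using (((hasDerivAt_id x).const_mul ξ).div_const σ).const_add 1

include hσ hξ

lemma gpU_pos {x : ℝ} (hx : 0 ≤ x) : 0 < gpU σ ξ x := by
  unfold gpU; positivity

lemma gpU_one_le {x : ℝ} (hx : 0 ≤ x) : 1 ≤ gpU σ ξ x := by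
  unfold gpU
  have : 0 ≤ ξ * x / σ := by positivity
  linarith

lemma gpA_hasDerivAt {x : ℝ} (hx : 0 ≤ x) :
    HasDerivAt (gpA σ ξ) ((-1 - 1 / ξ) * (gpA σ ξ x * (gpU σ ξ x)⁻¹) * (ξ / σ)) x := by
  have hu := gpU_pos hσ hξ hx
  have h := (gpU_hasDerivAt (σ := σ) (ξ := ξ) x).rpow_const
    (p := -1 - 1 / ξ) (Or.inl hu.ne')
  convert h using 1
  · rfl
  rw [show (-1 - 1 / ξ - 1 : ℝ) = (-1 - 1 / ξ) + (-1) by ring, Real.rpow_add hu,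
    Real.rpow_neg_one]
  simp only [gpA]
  ring

lemma gpL_hasDerivAt {x : ℝ} (hx : 0 ≤ x) :
    HasDerivAt (gpL σ ξ) (ξ / σ / gpU σ ξ x) x :=
  (gpU_hasDerivAt x).log (gpU_pos hσ hξ hx).ne'

lemma gpFp_hasDerivAt {x : ℝ} (hx : 0 ≤ x) :
    HasDerivAt (gpFp σ ξ) (gpP σ ξ x) x := by
  have hu := gpU_pos hσ hξ hx
  have hU := gpU_hasDerivAt (σ := σ) (ξ := ξ) x
  have hA := gpA_hasDerivAt hσ hξ hx
  have hL := gpL_hasDerivAt hσ hξ hx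
  have h : HasDerivAt (gpFp σ ξ)
      (σ * (1 / (σ ^ 2 * ξ ^ 3)) / ξ *
        ((-((2 + 5 * ξ + ξ ^ 2) * ξ / (1 + ξ))) *
            ((-1 - 1 / ξ) * (gpA σ ξ x * (gpU σ ξ x)⁻¹) * (ξ / σ)) -
          ξ * (((-1 - 1 / ξ) * (gpA σ ξ x * (gpU σ ξ x)⁻¹) * (ξ / σ)) *
              (gpU σ ξ x * gpL σ ξ x) +
            gpA σ ξ x * (ξ / σ * gpL σ ξ x + gpU σ ξ x * (ξ / σ / gpU σ ξ x))) -
          ξ ^ 2 * (((-1 - 1 / ξ) * (gpA σ ξ x * (gpU σ ξ x)⁻¹) * (ξ / σ)) * gpU σ ξ x +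
            gpA σ ξ x * (ξ / σ)))) x := by
    exact (((hA.const_mul _).sub ((hA.mul (hU.mul hL)).const_mul ξ)).sub
      ((hA.mul hU).const_mul (ξ ^ 2))).const_mul _
  convert h using 1
  unfold gpP
  field_simp
  ring

lemma gpFn_hasDerivAt {x : ℝ} (hx : 0 ≤ x) :
    HasDerivAt (gpFn σ ξ) (gpN σ ξ x) x := by
  have hu := gpU_pos hσ hξ hx
  have hU := gpU_hasDerivAt (σ := σ) (ξ := ξ) x
  have hA := gpA_hasDerivAt hσ hξ hx
  have hL := gpL_hasDerivAt hσ hξ hx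
  have hUinv : HasDerivAt (fun x => (gpU σ ξ x)⁻¹) (-(ξ / σ) / gpU σ ξ x ^ 2) x :=
    hU.inv hu.ne'
  have h : HasDerivAt (gpFn σ ξ)
      (σ * (1 / (σ ^ 2 * ξ ^ 3)) / ξ *
        ((-((ξ / (1 + ξ) + (1 + ξ)) * ξ)) *
            (((-1 - 1 / ξ) * (gpA σ ξ x * (gpU σ ξ x)⁻¹) * (ξ / σ)) * gpU σ ξ x +
              gpA σ ξ x * (ξ / σ)) -
          ((1 + ξ) * (1 + 2 * ξ) * ξ / (1 + 2 * ξ)) *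
            (((-1 - 1 / ξ) * (gpA σ ξ x * (gpU σ ξ x)⁻¹) * (ξ / σ)) * (gpU σ ξ x)⁻¹ +
              gpA σ ξ x * (-(ξ / σ) / gpU σ ξ x ^ 2)) -
          ξ * (((-1 - 1 / ξ) * (gpA σ ξ x * (gpU σ ξ x)⁻¹) * (ξ / σ)) * gpL σ ξ x +
            gpA σ ξ x * (ξ / σ / gpU σ ξ x)) -
          ξ ^ 2 / (1 + ξ) * ((-1 - 1 / ξ) * (gpA σ ξ x * (gpU σ ξ x)⁻¹) * (ξ / σ)))) x := by
    exact (((((hA.mul hU).const_mul _).sub ((hA.mul hUinv).const_mul _)).sub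
      ((hA.mul hL).const_mul ξ)).sub (hA.const_mul _)).const_mul _
  convert h using 1
  unfold gpN
  field_simp
  ring

end aux

set_option maxHeartbeats 1000000 in
theorem gp_orthogonal_scale_reparam (σ ξ : ℝ) (hσ : 0 < σ) (hξ : 0 < ξ) :
    ∫ x in Set.Ioi (0 : ℝ),
        gpScoreSigma σ ξ x *
          (-(σ / (1 + ξ)) * gpScoreSigma σ ξ x + gpScoreXi σ ξ x) * gpPdf σ ξ x = 0 := by
  have hσ' : σ ≠ 0 := hσ.ne'
  have hξ' : ξ ≠ 0 := hξ.ne'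
  have h1 : (0:ℝ) < 1 + ξ := by linarith
  have h2 : (0:ℝ) < 1 + 2 * ξ := by linarith
  -- the integrand equals gpP - gpN on Ioi 0
  have hsplit : ∀ x ∈ Set.Ioi (0:ℝ),
      gpScoreSigma σ ξ x * (-(σ / (1 + ξ)) * gpScoreSigma σ ξ x + gpScoreXi σ ξ x) *
          gpPdf σ ξ x = gpP σ ξ x - gpN σ ξ x := by
    intro x hx
    have hx0 : (0:ℝ) < x := hx
    have hσx : (0:ℝ) < σ + ξ * x := by positivity
    have hu : (0:ℝ) < 1 + ξ * x / σ := by positivity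
    simp only [gpScoreSigma, gpScoreXi, gpPdf, gpP, gpN, gpA, gpL, gpU]
    generalize Real.log (1 + ξ * x / σ) = L
    generalize (1 + ξ * x / σ) ^ (-1 - 1/ξ : ℝ) = A
    field_simp
    ring
  -- limits of the antiderivatives at infinity
  have hUtop : Tendsto (gpU σ ξ) atTop atTop := by
    unfold gpU
    exact tendsto_atTop_add_const_left _ 1
      ((tendsto_id.const_mul_atTop hξ).atTop_div_const hσ)
  have habove : ∀ᶠ x in atTop, (0:ℝ) < gpU σ ξ x :=
    hUtop.eventually_gt_atTop 0
  have hApos : (0:ℝ) < 1 + 1 / ξ := by positivity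
  have hAtop : Tendsto (gpA σ ξ) atTop (nhds 0) := by
    have := (tendsto_rpow_neg_atTop hApos).comp hUtop
    refine this.congr fun x => ?_
    simp only [Function.comp, gpA]
    congr 1
    ring
  have hAUtop : Tendsto (fun x => gpA σ ξ x * gpU σ ξ x) atTop (nhds 0) := by
    have := (tendsto_rpow_neg_atTop (by positivity : (0:ℝ) < 1/ξ)).comp hUtop
    refine this.congr' ?_
    filter_upwards [habove] with x hu
    simp only [Function.comp, gpA]
    rw [show (-(1/ξ) : ℝ) = (-1 - 1/ξ) + 1 by ring, Real.rpow_add hu, Real.rpow_one]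
  have hlogdiv : ∀ (r : ℝ), 0 < r →
      Tendsto (fun x => gpA σ ξ x * gpU σ ξ x ^ r * gpL σ ξ x) atTop (nhds 0) →
      True := fun _ _ _ => trivial
  -- A * U * L → 0
  have hAULtop : Tendsto (fun x => gpA σ ξ x * (gpU σ ξ x * gpL σ ξ x)) atTop (nhds 0) := by
    have h := ((isLittleO_log_rpow_atTop (by positivity : (0:ℝ) < 1/ξ)).tendsto_div_nhds_zero).comp hUtop
    refine h.congr' ?_
    filter_upwards [habove] with x hu
    simp only [Function.comp, gpA, gpL]
    rw [div_eq_mul_inv, ← Real.rpow_neg hu.le,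
      show (-(1/ξ) : ℝ) = (-1 - 1/ξ) + 1 by ring, Real.rpow_add hu, Real.rpow_one]
    ring
  -- A * L → 0
  have hALtop : Tendsto (fun x => gpA σ ξ x * gpL σ ξ x) atTop (nhds 0) := by
    have h := ((isLittleO_log_rpow_atTop hApos).tendsto_div_nhds_zero).comp hUtop
    refine h.congr' ?_
    filter_upwards [habove] with x hu
    simp only [Function.comp, gpA, gpL]
    rw [div_eq_mul_inv, ← Real.rpow_neg hu.le,
      show (-(1 + 1/ξ) : ℝ) = (-1 - 1/ξ) by ring]
    ring
  -- A * U⁻¹ → 0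
  have hAUinvtop : Tendsto (fun x => gpA σ ξ x * (gpU σ ξ x)⁻¹) atTop (nhds 0) := by
    have := (tendsto_rpow_neg_atTop (by positivity : (0:ℝ) < 2 + 1/ξ)).comp hUtop
    refine this.congr' ?_
    filter_upwards [habove] with x hu
    simp only [Function.comp, gpA]
    rw [show (-(2 + 1/ξ) : ℝ) = (-1 - 1/ξ) + (-1) by ring, Real.rpow_add hu,
      Real.rpow_neg_one]
  have hFptop : Tendsto (gpFp σ ξ) atTop (nhds 0) := by
    have : Tendsto (gpFp σ ξ) atTop (nhds (σ * (1 / (σ ^ 2 * ξ ^ 3)) / ξ *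
        (-((2 + 5 * ξ + ξ ^ 2) * ξ / (1 + ξ)) * 0 - ξ * 0 - ξ ^ 2 * 0))) := by
      exact (((hAtop.const_mul _).sub (hAULtop.const_mul ξ)).sub
        (hAUtop.const_mul (ξ ^ 2))).const_mul _
    simpa using this
  have hFntop : Tendsto (gpFn σ ξ) atTop (nhds 0) := by
    have : Tendsto (gpFn σ ξ) atTop (nhds (σ * (1 / (σ ^ 2 * ξ ^ 3)) / ξ *
        (-((ξ / (1 + ξ) + (1 + ξ)) * ξ) * 0 - ((1 + ξ) * (1 + 2 * ξ) * ξ / (1 + 2 * ξ)) * 0 -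
          ξ * 0 - ξ ^ 2 / (1 + ξ) * 0))) := by
      exact ((((hAUtop.const_mul _).sub (hAUinvtop.const_mul _)).sub
        (hALtop.const_mul ξ)).sub (hAtop.const_mul _)).const_mul _
    simpa using this
  -- nonnegativity
  have hPpos : ∀ x ∈ Set.Ioi (0:ℝ), 0 ≤ gpP σ ξ x := by
    intro x hx
    have hx0 : (0:ℝ) < x := hx
    have hu := gpU_pos hσ hξ hx0.le
    have hu1 := gpU_one_le hσ hξ hx0.le
    have hA : 0 ≤ gpA σ ξ x := Real.rpow_nonneg hu.le _
    have hL : 0 ≤ gpL σ ξ x := Real.log_nonneg hu1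
    unfold gpP
    have : 0 ≤ (2 + 5 * ξ + ξ ^ 2) * (gpU σ ξ x)⁻¹ + gpL σ ξ x := by positivity
    positivity
  have hNpos : ∀ x ∈ Set.Ioi (0:ℝ), 0 ≤ gpN σ ξ x := by
    intro x hx
    have hx0 : (0:ℝ) < x := hx
    have hu := gpU_pos hσ hξ hx0.le
    have hu1 := gpU_one_le hσ hξ hx0.le
    have hA : 0 ≤ gpA σ ξ x := Real.rpow_nonneg hu.le _
    have hL : 0 ≤ gpL σ ξ x := Real.log_nonneg hu1
    unfold gpN
    have h0 : 0 ≤ ξ / (1 + ξ) + (1 + ξ) := by positivity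
    have : 0 ≤ (ξ / (1 + ξ) + (1 + ξ)) + (1 + ξ) * (1 + 2 * ξ) * ((gpU σ ξ x)⁻¹) ^ 2 +
        (1 + ξ) * (gpU σ ξ x)⁻¹ * gpL σ ξ x := by positivity
    positivity
  -- continuity at 0 from the right (they are differentiable at 0)
  have hFpc : ContinuousWithinAt (gpFp σ ξ) (Set.Ici 0) 0 :=
    (gpFp_hasDerivAt hσ hξ le_rfl).continuousAt.continuousWithinAt
  have hFnc : ContinuousWithinAt (gpFn σ ξ) (Set.Ici 0) 0 :=
    (gpFn_hasDerivAt hσ hξ le_rfl).continuousAt.continuousWithinAt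
  have hderivP : ∀ x ∈ Set.Ioi (0:ℝ), HasDerivAt (gpFp σ ξ) (gpP σ ξ x) x :=
    fun x hx => gpFp_hasDerivAt hσ hξ (le_of_lt hx)
  have hderivN : ∀ x ∈ Set.Ioi (0:ℝ), HasDerivAt (gpFn σ ξ) (gpN σ ξ x) x :=
    fun x hx => gpFn_hasDerivAt hσ hξ (le_of_lt hx)
  have hIP : ∫ x in Set.Ioi (0:ℝ), gpP σ ξ x = 0 - gpFp σ ξ 0 :=
    integral_Ioi_of_hasDerivAt_of_nonneg hFpc hderivP hPpos hFptop
  have hIN : ∫ x in Set.Ioi (0:ℝ), gpN σ ξ x = 0 - gpFn σ ξ 0 :=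
    integral_Ioi_of_hasDerivAt_of_nonneg hFnc hderivN hNpos hFntop
  have hintP : IntegrableOn (gpP σ ξ) (Set.Ioi (0:ℝ)) :=
    integrableOn_Ioi_deriv_of_nonneg hFpc hderivP hPpos hFptop
  have hintN : IntegrableOn (gpN σ ξ) (Set.Ioi (0:ℝ)) :=
    integrableOn_Ioi_deriv_of_nonneg hFnc hderivN hNpos hFntop
  have hval : gpFp σ ξ 0 = gpFn σ ξ 0 := by
    have hu0 : gpU σ ξ 0 = 1 := by simp [gpU]
    have hA0 : gpA σ ξ 0 = 1 := by rw [gpA, hu0, Real.one_rpow]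
    have hL0 : gpL σ ξ 0 = 0 := by rw [gpL, hu0, Real.log_one]
    simp only [gpFp, gpFn, hu0, hA0, hL0]
    field_simp
    ring
  calc ∫ x in Set.Ioi (0:ℝ),
        gpScoreSigma σ ξ x *
          (-(σ / (1 + ξ)) * gpScoreSigma σ ξ x + gpScoreXi σ ξ x) * gpPdf σ ξ x
      = ∫ x in Set.Ioi (0:ℝ), (gpP σ ξ x - gpN σ ξ x) :=
        setIntegral_congr_fun measurableSet_Ioi hsplit
    _ = (∫ x in Set.Ioi (0:ℝ), gpP σ ξ x) - ∫ x in Set.Ioi (0:ℝ), gpN σ ξ x :=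
        integral_sub hintP hintN
    _ = 0 := by rw [hIP, hIN, hval]; ring
end

section
/- (Orthogonality of the GP reparametrisation with transformed shape parameter ξ̃(σ,ζ) = C₄(ζ) − log(σ)/2.) For all σ > 0 and ξ > 0, ∫_0^∞ s_ξ(x;σ,ξ) · ( s_σ(x;σ,ξ) − (1/(2σ))·s_ξ(x;σ,ξ) ) · f(x;σ,ξ) dx = 0. Equivalently, the Fisher cross-information between the new parameters σ and ζ vanishes, since the score in ζ is proportional to s_ξ and the score in σ under the reparametrisation is s_σ + (∂ξ̃/∂σ)·s_ξ = s_σ − (1/(2σ))·s_ξ by the chain rule. -/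
open MeasureTheory Real

open MeasureTheory Real Filter Set Topology

lemma gp_tendsto_aux (c b : ℝ) (hc : 0 < c) (hb : 0 < b) (k : ℕ) :
    Tendsto (fun x : ℝ => (Real.log (1 + c * x)) ^ k * (1 + c * x) ^ (-b)) atTop (𝓝 0) := by
  have h1 : Tendsto (fun x : ℝ => 1 + c * x) atTop atTop :=
    tendsto_atTop_add_const_left _ 1 (tendsto_id.const_mul_atTop hc)
  have h2 : Tendsto (fun u : ℝ => (Real.log u) ^ k * u ^ (-b)) atTop (𝓝 0) := by
    have h := (isLittleO_log_rpow_rpow_atTop (k : ℝ) hb).tendsto_div_nhds_zero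
    refine h.congr' ?_
    filter_upwards [eventually_gt_atTop (0:ℝ)] with u hu
    rw [Real.rpow_natCast, Real.rpow_neg hu.le, div_eq_mul_inv]
  exact h2.comp h1

lemma gp_hasDerivAt_u (c x : ℝ) : HasDerivAt (fun y : ℝ => 1 + c * y) c x := by
  simpa using ((hasDerivAt_id x).const_mul c).const_add 1

lemma gp_hasDerivAt_rpow (c p x : ℝ) (hu : 0 < 1 + c * x) :
    HasDerivAt (fun y : ℝ => (1 + c * y) ^ p) (p * (1 + c * x) ^ (p - 1) * c) x := by
  have h := (Real.hasDerivAt_rpow_const (x := 1 + c * x) (p := p)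
    (Or.inl hu.ne')).comp x (gp_hasDerivAt_u c x)
  exact h

lemma gp_hasDerivAt_log (c x : ℝ) (hu : 0 < 1 + c * x) :
    HasDerivAt (fun y : ℝ => Real.log (1 + c * y)) (c / (1 + c * x)) x := by
  have h := (Real.hasDerivAt_log hu.ne').comp x (gp_hasDerivAt_u c x)
  rw [div_eq_inv_mul]; exact h

lemma gp_hasDerivAt_G (b c A2 A1 A0 x : ℝ) (hu : 0 < 1 + c * x) :
    HasDerivAt
      (fun y : ℝ => (1 + c * y) ^ (-b) *
        (A2 * (Real.log (1 + c * y)) ^ 2 + A1 * Real.log (1 + c * y) + A0))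
      ((1 + c * x) ^ (-1 - b) *
        (c * (-b * (A2 * (Real.log (1 + c * x)) ^ 2 + A1 * Real.log (1 + c * x) + A0)
          + (2 * A2 * Real.log (1 + c * x) + A1)))) x := by
  have hU := gp_hasDerivAt_rpow c (-b) x hu
  have hL := gp_hasDerivAt_log c x hu
  have hQ : HasDerivAt
      (fun y : ℝ => A2 * (Real.log (1 + c * y)) ^ 2 + A1 * Real.log (1 + c * y) + A0)
      (A2 * (2 * Real.log (1 + c * x) ^ 1 * (c / (1 + c * x))) + A1 * (c / (1 + c * x))) x :=
    (((hL.pow 2).const_mul A2).add (hL.const_mul A1)).add_const A0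
  have h := hU.mul hQ
  refine h.congr_deriv ?_
  have e1 : (1 + c * x) ^ (-b) = (1 + c * x) ^ (-1 - b) * (1 + c * x) := by
    rw [← Real.rpow_add_one hu.ne']; ring_nf
  have e2 : (1 + c * x) ^ (-b - 1) = (1 + c * x) ^ (-1 - b) := by ring_nf
  rw [e2] at *
  rw [e1]
  field_simp

lemma gp_aux (b c A2 A1 A0 : ℝ) (hb : 0 < b) (hc : 0 < c) (g : ℝ → ℝ)
    (hg : ∀ x : ℝ, 0 ≤ x → g x = (1 + c * x) ^ (-1 - b) *
        (c * (-b * (A2 * (Real.log (1 + c * x)) ^ 2 + A1 * Real.log (1 + c * x) + A0)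
          + (2 * A2 * Real.log (1 + c * x) + A1))))
    (hpos : ∀ x : ℝ, 0 < x → 0 ≤ g x) :
    IntegrableOn g (Set.Ioi 0) ∧ ∫ x in Set.Ioi 0, g x = -A0 := by
  set G : ℝ → ℝ := fun y => (1 + c * y) ^ (-b) *
      (A2 * (Real.log (1 + c * y)) ^ 2 + A1 * Real.log (1 + c * y) + A0) with hGdef
  have hderiv : ∀ x ∈ Set.Ici (0:ℝ), HasDerivAt G (g x) x := by
    intro x hx
    have hu : 0 < 1 + c * x := by
      have := mul_nonneg hc.le hx
      linarith
    rw [hg x hx]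
    exact gp_hasDerivAt_G b c A2 A1 A0 x hu
  have htend : Tendsto G atTop (𝓝 0) := by
    have t2 := (gp_tendsto_aux c b hc hb 2).const_mul A2
    have t1 := (gp_tendsto_aux c b hc hb 1).const_mul A1
    have t0 := (gp_tendsto_aux c b hc hb 0).const_mul A0
    have h := (t2.add t1).add t0
    simp only [mul_zero, add_zero] at h
    refine h.congr fun x => ?_
    simp only [hGdef, pow_zero, pow_one]
    ring
  have hpos' : ∀ x ∈ Set.Ioi (0:ℝ), 0 ≤ g x := fun x hx => hpos x hx
  refine ⟨integrableOn_Ioi_deriv_of_nonneg' hderiv hpos' htend, ?_⟩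
  rw [integral_Ioi_of_hasDerivAt_of_nonneg' hderiv hpos' htend]
  have hG0 : G 0 = A0 := by norm_num [hGdef]
  rw [hG0, zero_sub]

lemma gp_mono0 (b c : ℝ) (hb : 0 < b) (hc : 0 < c) :
    IntegrableOn (fun x : ℝ => (1 + c * x) ^ (-1 - b)) (Set.Ioi 0) ∧
    ∫ x in Set.Ioi 0, (1 + c * x) ^ (-1 - b) = 1 / (c * b) := by
  have h := gp_aux b c 0 0 (-(1/(c*b))) hb hc (fun x : ℝ => (1 + c * x) ^ (-1 - b))
    (fun x hx => by
      have hcb : c * b ≠ 0 := by positivity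
      field_simp
      ring)
    (fun x hx => by
      have hu : (0:ℝ) ≤ 1 + c * x := by nlinarith
      exact Real.rpow_nonneg hu _)
  simpa using h

lemma gp_mono1 (b c : ℝ) (hb : 0 < b) (hc : 0 < c) :
    IntegrableOn (fun x : ℝ => Real.log (1 + c * x) * (1 + c * x) ^ (-1 - b)) (Set.Ioi 0) ∧
    ∫ x in Set.Ioi 0, Real.log (1 + c * x) * (1 + c * x) ^ (-1 - b) = 1 / (c * b ^ 2) := by
  have h := gp_aux b c 0 (-(1/(c*b))) (-(1/(c*b^2))) hb hc
    (fun x : ℝ => Real.log (1 + c * x) * (1 + c * x) ^ (-1 - b))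
    (fun x hx => by
      have hcb : c * b ≠ 0 := by positivity
      field_simp
      ring)
    (fun x hx => by
      have hu : (0:ℝ) ≤ c * x := by positivity
      exact mul_nonneg (Real.log_nonneg (by linarith)) (Real.rpow_nonneg (by linarith) _))
  simpa using h

lemma gp_mono2 (b c : ℝ) (hb : 0 < b) (hc : 0 < c) :
    IntegrableOn (fun x : ℝ => (Real.log (1 + c * x)) ^ 2 * (1 + c * x) ^ (-1 - b)) (Set.Ioi 0) ∧
    ∫ x in Set.Ioi 0, (Real.log (1 + c * x)) ^ 2 * (1 + c * x) ^ (-1 - b) = 2 / (c * b ^ 3) := by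
  have h := gp_aux b c (-(1/(c*b))) (-(2/(c*b^2))) (-(2/(c*b^3))) hb hc
    (fun x : ℝ => (Real.log (1 + c * x)) ^ 2 * (1 + c * x) ^ (-1 - b))
    (fun x hx => by
      have hcb : c * b ≠ 0 := by positivity
      field_simp
      ring)
    (fun x hx => by
      have hu : (0:ℝ) ≤ c * x := by positivity
      exact mul_nonneg (pow_nonneg (Real.log_nonneg (by linarith)) 2)
        (Real.rpow_nonneg (by linarith) _))
  simpa using h

theorem gp_orthogonal_shape_reparam (σ ξ : ℝ) (hσ : 0 < σ) (hξ : 0 < ξ) :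
    ∫ x in Set.Ioi (0 : ℝ),
        gpScoreXi σ ξ x *
          (gpScoreSigma σ ξ x - (1 / (2 * σ)) * gpScoreXi σ ξ x) * gpPdf σ ξ x = 0 := by
  have hσ' := hσ.ne'
  have hξ' := hξ.ne'
  set c : ℝ := ξ / σ with hcdef
  have hc : 0 < c := div_pos hξ hσ
  have hb0 : (0:ℝ) < 1/ξ := by positivity
  have hb1 : (0:ℝ) < 1 + 1/ξ := by positivity
  have hb2 : (0:ℝ) < 2 + 1/ξ := by positivity
  obtain ⟨hi1, hv1⟩ := gp_mono0 (1/ξ) c hb0 hc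
  obtain ⟨hi2, hv2⟩ := gp_mono1 (1/ξ) c hb0 hc
  obtain ⟨hi3, hv3⟩ := gp_mono2 (1/ξ) c hb0 hc
  obtain ⟨hi4, hv4⟩ := gp_mono0 (1+1/ξ) c hb1 hc
  obtain ⟨hi5, hv5⟩ := gp_mono1 (1+1/ξ) c hb1 hc
  obtain ⟨hi6, hv6⟩ := gp_mono0 (2+1/ξ) c hb2 hc
  set k1 : ℝ := -(1+ξ)*(1+3*ξ)/(2*σ^2*ξ^4) with hk1
  set k2 : ℝ := (1+2*ξ)/(σ^2*ξ^4) with hk2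
  set k3 : ℝ := -1/(2*σ^2*ξ^4) with hk3
  set k4 : ℝ := (1+ξ)*(ξ^2+3*ξ+1)/(σ^2*ξ^4) with hk4
  set k5 : ℝ := -(1+ξ)^2/(σ^2*ξ^4) with hk5
  set k6 : ℝ := -(1+ξ)^2*(1+2*ξ)/(2*σ^2*ξ^4) with hk6
  have key : Set.EqOn
      (fun x => gpScoreXi σ ξ x *
          (gpScoreSigma σ ξ x - (1 / (2 * σ)) * gpScoreXi σ ξ x) * gpPdf σ ξ x)
      (fun x => k3 * ((Real.log (1 + c * x)) ^ 2 * (1 + c * x) ^ (-1 - 1/ξ)) +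
        (k2 * (Real.log (1 + c * x) * (1 + c * x) ^ (-1 - 1/ξ)) +
        (k1 * ((1 + c * x) ^ (-1 - 1/ξ)) +
        (k5 * (Real.log (1 + c * x) * (1 + c * x) ^ (-1 - (1+1/ξ))) +
        (k4 * ((1 + c * x) ^ (-1 - (1+1/ξ))) +
        k6 * ((1 + c * x) ^ (-1 - (2+1/ξ))))))))
      (Set.Ioi 0) := by
    intro x hx
    have hx0 : (0:ℝ) < x := hx
    have hu : (0:ℝ) < 1 + ξ*x/σ := by positivity
    have hsx : (0:ℝ) < σ + ξ*x := by positivity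
    have hcx : 1 + c*x = 1 + ξ*x/σ := by rw [hcdef]; ring
    simp only [gpPdf, gpScoreSigma, gpScoreXi, hcx]
    rw [show (-1 - (1+1/ξ)) = (-1-1/ξ) + (-1) by ring,
        show (-1 - (2+1/ξ)) = ((-1-1/ξ) + (-1)) + (-1) by ring]
    simp only [Real.rpow_add hu, Real.rpow_neg_one]
    rw [hk1, hk2, hk3, hk4, hk5, hk6]
    field_simp
    ring
  have ha1 : IntegrableOn (fun x : ℝ => k4 * ((1 + c * x) ^ (-1 - (1+1/ξ))) +
      k6 * ((1 + c * x) ^ (-1 - (2+1/ξ)))) (Set.Ioi 0) :=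
    (hi4.const_mul k4).add (hi6.const_mul k6)
  have ha2 : IntegrableOn (fun x : ℝ => k5 * (Real.log (1 + c * x) * (1 + c * x) ^ (-1 - (1+1/ξ))) +
      (k4 * ((1 + c * x) ^ (-1 - (1+1/ξ))) + k6 * ((1 + c * x) ^ (-1 - (2+1/ξ))))) (Set.Ioi 0) :=
    (hi5.const_mul k5).add ha1
  have ha3 : IntegrableOn (fun x : ℝ => k1 * ((1 + c * x) ^ (-1 - 1/ξ)) +
      (k5 * (Real.log (1 + c * x) * (1 + c * x) ^ (-1 - (1+1/ξ))) +
      (k4 * ((1 + c * x) ^ (-1 - (1+1/ξ))) + k6 * ((1 + c * x) ^ (-1 - (2+1/ξ)))))) (Set.Ioi 0) :=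
    (hi1.const_mul k1).add ha2
  have ha4 : IntegrableOn (fun x : ℝ => k2 * (Real.log (1 + c * x) * (1 + c * x) ^ (-1 - 1/ξ)) +
      (k1 * ((1 + c * x) ^ (-1 - 1/ξ)) +
      (k5 * (Real.log (1 + c * x) * (1 + c * x) ^ (-1 - (1+1/ξ))) +
      (k4 * ((1 + c * x) ^ (-1 - (1+1/ξ))) + k6 * ((1 + c * x) ^ (-1 - (2+1/ξ))))))) (Set.Ioi 0) :=
    (hi2.const_mul k2).add ha3
  rw [setIntegral_congr_fun measurableSet_Ioi key]
  rw [integral_add (hi3.const_mul k3) ha4]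
  rw [integral_add (hi2.const_mul k2) ha3]
  rw [integral_add (hi1.const_mul k1) ha2]
  rw [integral_add (hi5.const_mul k5) ha1]
  rw [integral_add (hi4.const_mul k4) (hi6.const_mul k6)]
  simp only [MeasureTheory.integral_const_mul]
  rw [hv1, hv2, hv3, hv4, hv5, hv6, hk1, hk2, hk3, hk4, hk5, hk6, hcdef]
  have h1ξ : (1:ℝ) + ξ ≠ 0 := by positivity
  have h2ξ : (1:ℝ) + 2*ξ ≠ 0 := by positivity
  field_simp
  ring
end

section
/- (Orthogonality of the three-parameter GP reparametrisation (μ,ν,ξ) ↦ (μ, ν/(ξ+1), ξ).) For all μ ∈ ℝ, σ > 0 and ξ > 0, both of the following hold: ∫_μ^∞ s_μ(x;μ,σ,ξ) · ( s_ξ(x;μ,σ,ξ) − (σ/(1+ξ))·s_σ(x;μ,σ,ξ) ) · f(x;μ,σ,ξ) dx = 0 and ∫_μ^∞ s_σ(x;μ,σ,ξ) · ( s_ξ(x;μ,σ,ξ) − (σ/(1+ξ))·s_σ(x;μ,σ,ξ) ) · f(x;μ,σ,ξ) dx = 0. Equivalently, after the reparametrisation with transformed scale σ̃ = ν/(ξ+1),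 whose score in ξ is s_ξ + (∂σ̃/∂ξ)·s_σ = s_ξ − (σ̃/(1+ξ))·s_σ by the chain rule, the Fisher cross-information between ξ and μ and between ξ and ν is zero. -/
open MeasureTheory Real

/-- Density of the three-parameter Generalised Pareto distribution GP(μ,σ,ξ), for x > μ. -/
noncomputable def gp3Pdf (μ σ ξ x : ℝ) : ℝ :=
  (1 / σ) * (1 + ξ * (x - μ) / σ) ^ (-1 - 1 / ξ)

/-- Score of the three-parameter GP distribution with respect to the location parameter μ. -/
noncomputable def gp3ScoreMu (μ σ ξ x : ℝ) : ℝ :=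
  (1 + ξ) / (σ + ξ * (x - μ))

/-- Score of the three-parameter GP distribution with respect to the scale parameter σ. -/
noncomputable def gp3ScoreSigma (μ σ ξ x : ℝ) : ℝ :=
  -1 / σ + (1 + ξ) * (x - μ) / (σ * (σ + ξ * (x - μ)))

/-- Score of the three-parameter GP distribution with respect to the shape parameter ξ. -/
noncomputable def gp3ScoreXi (μ σ ξ x : ℝ) : ℝ :=
  (1 / ξ ^ 2) * Real.log (1 + ξ * (x - μ) / σ) - (1 + 1 / ξ) * (x - μ) / (σ + ξ * (x - μ))


open Filter Topology Set

lemma gp3_key (μ b p A B : ℝ) (hb : 0 < b) (hp : 0 < p) :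
    IntegrableOn (fun x => b * (1 + b * (x - μ)) ^ (-p - 1) *
        (B - p * (A + B * Real.log (1 + b * (x - μ))))) (Set.Ioi μ) volume ∧
    ∫ x in Set.Ioi μ, b * (1 + b * (x - μ)) ^ (-p - 1) *
        (B - p * (A + B * Real.log (1 + b * (x - μ)))) = -A := by
  set w : ℝ → ℝ := fun x => 1 + b * (x - μ) with hw_def
  have hw1 : ∀ x ∈ Set.Ici μ, 1 ≤ w x := by
    intro x hx
    have : (0:ℝ) ≤ b * (x - μ) := mul_nonneg hb.le (by simp at hx; linarith)
    simp only [hw_def]; linarith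
  have hwpos : ∀ x ∈ Set.Ici μ, 0 < w x := fun x hx => lt_of_lt_of_le one_pos (hw1 x hx)
  have hwd : ∀ x : ℝ, HasDerivAt w b x := by
    intro x
    simpa [hw_def] using (((hasDerivAt_id x).sub_const μ).const_mul b).const_add 1
  set k : ℝ → ℝ := fun x => b * (w x) ^ (-p - 1) * (B - p * (A + B * Real.log (w x))) with hk_def
  set F : ℝ → ℝ := fun x => (A + B * Real.log (w x)) * (w x) ^ (-p) with hF_def
  -- derivative of F is k, on Ici μ
  have hFd : ∀ x ∈ Set.Ici μ, HasDerivAt F (k x) x := by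
    intro x hx
    have h1 : 0 < w x := hwpos x hx
    have hlog : HasDerivAt (fun y => Real.log (w y)) (b / w x) x := (hwd x).log h1.ne'
    have hr : HasDerivAt (fun y => (w y) ^ (-p)) (-(b * p * (w x) ^ (-p - 1))) x := by
      have := (hwd x).rpow_const (p := -p) (Or.inl h1.ne')
      simpa using this
    have : HasDerivAt F (((0:ℝ) + B * (b / w x)) * w x ^ (-p) + (A + B * Real.log (w x)) * -(b * p * w x ^ (-p - 1))) x :=
      ((hasDerivAt_const x A).add (hlog.const_mul B)).mul hr
    convert this using 1
    have hpow : w x ^ (-p) = w x ^ (-p - 1) * w x := by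
      rw [← Real.rpow_add_one h1.ne' (-p - 1)]; norm_num
    simp only [hk_def, hpow]
    field_simp
    ring
  -- tendsto F at top
  have hwtop : Tendsto w atTop atTop := by
    apply tendsto_atTop_add_const_left
    apply Tendsto.const_mul_atTop hb
    simpa [sub_eq_add_neg] using tendsto_atTop_add_const_right atTop (-μ) tendsto_id
  have hT0 : Tendsto (fun t : ℝ => (A + B * Real.log t) * t ^ (-p)) atTop (𝓝 0) := by
    have h1 : Tendsto (fun t : ℝ => A * t ^ (-p)) atTop (𝓝 (A * 0)) :=
      (tendsto_rpow_neg_atTop hp).const_mul A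
    have h2 : Tendsto (fun t : ℝ => Real.log t * t ^ (-p)) atTop (𝓝 0) := by
      have h := (isLittleO_log_rpow_atTop hp).tendsto_div_nhds_zero
      apply h.congr'
      filter_upwards [eventually_gt_atTop (0:ℝ)] with t ht
      rw [Real.rpow_neg ht.le, div_eq_mul_inv]
    have h2' : Tendsto (fun t : ℝ => B * (Real.log t * t ^ (-p))) atTop (𝓝 (B * 0)) :=
      h2.const_mul B
    have := h1.add h2'
    simp only [mul_zero, add_zero] at this
    apply this.congr
    intro t; ring
  have hFtop : Tendsto F atTop (𝓝 0) := hT0.comp hwtop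
  have hFμ : F μ = A := by
    simp [hF_def, hw_def]
  -- integrability of k
  set C : ℝ := |B| + p * |A| + 2 * |B| with hC_def
  have hC0 : 0 ≤ C := by positivity
  set D : ℝ → ℝ := fun x => C * b * (w x) ^ (-(p/2) - 1) with hD_def
  set G : ℝ → ℝ := fun x => -(2 * C / p) * (w x) ^ (-(p/2)) with hG_def
  have hGd : ∀ x ∈ Set.Ici μ, HasDerivAt G (D x) x := by
    intro x hx
    have h1 : 0 < w x := hwpos x hx
    have hr : HasDerivAt (fun y => (w y) ^ (-(p/2))) (-(b * (p/2) * (w x) ^ (-(p/2) - 1))) x := by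
      have := (hwd x).rpow_const (p := -(p/2)) (Or.inl h1.ne')
      simpa using this
    have : HasDerivAt G (-(2 * C / p) * -(b * (p / 2) * w x ^ (-(p / 2) - 1))) x :=
      hr.const_mul (-(2 * C / p))
    convert this using 1
    simp only [hD_def]
    field_simp
  have hGtop : Tendsto G atTop (𝓝 0) := by
    have h := ((tendsto_rpow_neg_atTop (half_pos hp)).comp hwtop).const_mul (-(2 * C / p))
    simp only [mul_zero] at h
    exact h.congr fun x => by simp [hG_def, neg_mul]
  have hDpos : ∀ x ∈ Set.Ioi μ, 0 ≤ D x := by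
    intro x hx
    have h1 : 0 < w x := hwpos x (Set.Ioi_subset_Ici_self hx)
    have := Real.rpow_nonneg h1.le (-(p/2) - 1)
    simp only [hD_def]
    positivity
  have hDint : IntegrableOn D (Set.Ioi μ) volume :=
    integrableOn_Ioi_deriv_of_nonneg' hGd hDpos hGtop
  -- measurability of k
  have hwc : Continuous w := by fun_prop
  have hkmeas : AEStronglyMeasurable k (volume.restrict (Set.Ioi μ)) := by
    have hne : ∀ x ∈ Set.Ioi μ, w x ≠ 0 := fun x hx => (hwpos x (Set.Ioi_subset_Ici_self hx)).ne'
    have h1 : ContinuousOn (fun x => (w x) ^ (-p - 1)) (Set.Ioi μ) :=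
      ContinuousOn.rpow_const hwc.continuousOn (fun x hx => Or.inl (hne x hx))
    have h2 : ContinuousOn (fun x => Real.log (w x)) (Set.Ioi μ) :=
      ContinuousOn.log hwc.continuousOn hne
    exact ((continuousOn_const.mul h1).mul (continuousOn_const.sub
      (continuousOn_const.mul (continuousOn_const.add
        (continuousOn_const.mul h2))))).aestronglyMeasurable measurableSet_Ioi
  have hbound : ∀ x ∈ Set.Ioi μ, ‖k x‖ ≤ ‖D x‖ := by
    intro x hx
    have h1 : 0 < w x := hwpos x (Set.Ioi_subset_Ici_self hx)
    have h11 : 1 ≤ w x := hw1 x (Set.Ioi_subset_Ici_self hx)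
    have hL : 0 ≤ Real.log (w x) := Real.log_nonneg h11
    have hlogle : Real.log (w x) ≤ (2/p) * (w x) ^ (p/2) := by
      have h2 : (p/2) * Real.log (w x) ≤ (w x) ^ (p/2) := by
        have h3 := Real.log_le_sub_one_of_pos (Real.rpow_pos_of_pos h1 (p/2))
        rw [Real.log_rpow h1] at h3
        linarith
      calc Real.log (w x) = (2/p) * ((p/2) * Real.log (w x)) := by field_simp
        _ ≤ (2/p) * (w x) ^ (p/2) := by
            apply mul_le_mul_of_nonneg_left h2 (by positivity)
    have hwp1 : 1 ≤ (w x) ^ (p/2) := by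
      calc (1:ℝ) = 1 ^ (p/2) := (Real.one_rpow _).symm
        _ ≤ (w x) ^ (p/2) := Real.rpow_le_rpow zero_le_one h11 (half_pos hp).le
    have habs : |B - p * (A + B * Real.log (w x))| ≤ C * (w x) ^ (p/2) := by
      have t1 : |B - p * (A + B * Real.log (w x))| ≤ |B| + p * (|A| + |B| * Real.log (w x)) := by
        rw [sub_eq_add_neg]
        refine (abs_add_le _ _).trans ?_
        rw [abs_neg, abs_mul, abs_of_pos hp]
        gcongr
        refine (abs_add_le _ _).trans ?_
        rw [abs_mul, abs_of_nonneg hL]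
      have t2 : |B| * Real.log (w x) ≤ |B| * ((2/p) * (w x) ^ (p/2)) := by
        apply mul_le_mul_of_nonneg_left hlogle (abs_nonneg B)
      calc |B - p * (A + B * Real.log (w x))|
          ≤ |B| + p * (|A| + |B| * ((2/p) * (w x) ^ (p/2))) := by
            refine t1.trans ?_; gcongr
        _ = |B| + p * |A| + 2 * |B| * (w x) ^ (p/2) := by field_simp; ring
        _ ≤ |B| * (w x) ^ (p/2) + p * |A| * (w x) ^ (p/2) + 2 * |B| * (w x) ^ (p/2) := by
            have hB := mul_le_mul_of_nonneg_left hwp1 (abs_nonneg B)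
            have hA := mul_le_mul_of_nonneg_left hwp1 (mul_nonneg hp.le (abs_nonneg A))
            nlinarith
        _ = C * (w x) ^ (p/2) := by rw [hC_def]; ring
    have hrpow_mul : (w x) ^ (-p - 1) * (w x) ^ (p/2) = (w x) ^ (-(p/2) - 1) := by
      rw [← Real.rpow_add h1]; ring_nf
    have hDval : ‖D x‖ = C * b * (w x) ^ (-(p/2) - 1) := by
      rw [Real.norm_eq_abs, abs_of_nonneg (hDpos x hx)]
    rw [hDval]
    calc ‖k x‖ = b * (w x) ^ (-p - 1) * |B - p * (A + B * Real.log (w x))| := by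
          rw [hk_def]
          simp only [Real.norm_eq_abs, abs_mul, abs_of_pos hb,
            abs_of_nonneg (Real.rpow_nonneg h1.le _)]
      _ ≤ b * (w x) ^ (-p - 1) * (C * (w x) ^ (p/2)) := by
          apply mul_le_mul_of_nonneg_left habs
          positivity
      _ = C * b * ((w x) ^ (-p - 1) * (w x) ^ (p/2)) := by ring
      _ = C * b * (w x) ^ (-(p/2) - 1) := by rw [hrpow_mul]
  have hkint : IntegrableOn k (Set.Ioi μ) volume :=
    MeasureTheory.Integrable.mono hDint hkmeas ((ae_restrict_iff' measurableSet_Ioi).mpr (ae_of_all _ hbound))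
  refine ⟨hkint, ?_⟩
  have := integral_Ioi_of_hasDerivAt_of_tendsto' hFd hkint hFtop
  rw [this, hFμ, zero_sub]


set_option maxHeartbeats 1000000 in
theorem gp3_orthogonal_reparam (μ σ ξ : ℝ) (hσ : 0 < σ) (hξ : 0 < ξ) :
    (∫ x in Set.Ioi μ,
        gp3ScoreMu μ σ ξ x *
          (gp3ScoreXi μ σ ξ x - (σ / (1 + ξ)) * gp3ScoreSigma μ σ ξ x) * gp3Pdf μ σ ξ x = 0)
    ∧ (∫ x in Set.Ioi μ,
        gp3ScoreSigma μ σ ξ x *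
          (gp3ScoreXi μ σ ξ x - (σ / (1 + ξ)) * gp3ScoreSigma μ σ ξ x) * gp3Pdf μ σ ξ x = 0) := by
  have hσ' : σ ≠ 0 := hσ.ne'
  have hξ' : ξ ≠ 0 := hξ.ne'
  have h1ξ : (0:ℝ) < 1 + ξ := by linarith
  have hb : 0 < ξ / σ := div_pos hξ hσ
  have hwpos : ∀ x ∈ Set.Ioi μ, 0 < 1 + ξ * (x - μ) / σ := by
    intro x hx
    have : 0 < ξ * (x - μ) / σ := div_pos (mul_pos hξ (sub_pos.mpr hx)) hσ
    linarith
  constructor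
  · obtain ⟨hIa, hVa⟩ := gp3_key μ (ξ/σ) (1 + 1/ξ) ((1+ξ)/(σ*ξ^2)) (-(1/(σ*ξ^2))) hb
      (by positivity)
    obtain ⟨hIb, hVb⟩ := gp3_key μ (ξ/σ) (2 + 1/ξ) (-((1+ξ)/(σ*ξ^2))) 0 hb (by positivity)
    have heq : Set.EqOn
        (fun x => gp3ScoreMu μ σ ξ x *
          (gp3ScoreXi μ σ ξ x - (σ / (1 + ξ)) * gp3ScoreSigma μ σ ξ x) * gp3Pdf μ σ ξ x)
        (fun x => (ξ/σ) * (1 + ξ/σ * (x - μ)) ^ (-(1 + 1/ξ) - 1) *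
            (-(1/(σ*ξ^2)) - (1 + 1/ξ) * ((1+ξ)/(σ*ξ^2) +
              -(1/(σ*ξ^2)) * Real.log (1 + ξ/σ * (x - μ))))
          + (ξ/σ) * (1 + ξ/σ * (x - μ)) ^ (-(2 + 1/ξ) - 1) *
            ((0:ℝ) - (2 + 1/ξ) * (-((1+ξ)/(σ*ξ^2)) +
              (0:ℝ) * Real.log (1 + ξ/σ * (x - μ)))))
        (Set.Ioi μ) := by
      intro x hx
      have hw : 0 < 1 + ξ * (x - μ) / σ := hwpos x hx
      have hwne : (1 + ξ * (x - μ) / σ) ≠ 0 := hw.ne'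
      have hbw : 1 + ξ/σ * (x - μ) = 1 + ξ * (x - μ) / σ := by ring
      simp only [gp3ScoreMu, gp3ScoreXi, gp3ScoreSigma, gp3Pdf, hbw]
      have hswne : σ + ξ * (x - μ) ≠ 0 := by
        have h2 : 0 < ξ * (x - μ) := mul_pos hξ (sub_pos.mpr hx)
        positivity
      have e1 : (1 + ξ * (x - μ) / σ) ^ (-(1 + 1/ξ) - 1)
          = (1 + ξ * (x - μ) / σ) ^ (-1 - 1/ξ) * (1 + ξ * (x - μ) / σ)⁻¹ := by
        rw [show -(1 + 1/ξ) - 1 = (-1 - 1/ξ) + (-1) by ring, Real.rpow_add hw,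
          Real.rpow_neg_one]
      have e2 : (1 + ξ * (x - μ) / σ) ^ (-(2 + 1/ξ) - 1)
          = (1 + ξ * (x - μ) / σ) ^ (-1 - 1/ξ) * (1 + ξ * (x - μ) / σ)⁻¹
              * (1 + ξ * (x - μ) / σ)⁻¹ := by
        rw [show -(2 + 1/ξ) - 1 = ((-1 - 1/ξ) + (-1)) + (-1) by ring, Real.rpow_add hw,
          Real.rpow_add hw, Real.rpow_neg_one]
      rw [e1, e2]
      generalize Real.log (1 + ξ * (x - μ) / σ) = L
      generalize (1 + ξ * (x - μ) / σ) ^ (-1 - 1/ξ : ℝ) = t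
      field_simp [hwne, hswne, h1ξ.ne']
      ring
    rw [MeasureTheory.setIntegral_congr_fun measurableSet_Ioi heq,
      MeasureTheory.integral_add hIa hIb, hVa, hVb]
    field_simp
    ring
  · obtain ⟨hI0, hV0⟩ := gp3_key μ (ξ/σ) (1/ξ) ((1+2*ξ)/((1+ξ)*σ*ξ^3)) (-(1/(σ*ξ^3))) hb
      (by positivity)
    obtain ⟨hI1, hV1⟩ := gp3_key μ (ξ/σ) (1 + 1/ξ) (-((ξ^2+4*ξ+2)/((1+ξ)*σ*ξ^3))) (1/(σ*ξ^3))
      hb (by positivity)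
    obtain ⟨hI2, hV2⟩ := gp3_key μ (ξ/σ) (2 + 1/ξ) ((1+ξ)/(σ*ξ^3)) 0 hb (by positivity)
    have heq : Set.EqOn
        (fun x => gp3ScoreSigma μ σ ξ x *
          (gp3ScoreXi μ σ ξ x - (σ / (1 + ξ)) * gp3ScoreSigma μ σ ξ x) * gp3Pdf μ σ ξ x)
        (fun x => (ξ/σ) * (1 + ξ/σ * (x - μ)) ^ (-(1/ξ) - 1) *
            (-(1/(σ*ξ^3)) - (1/ξ) * ((1+2*ξ)/((1+ξ)*σ*ξ^3) +
              -(1/(σ*ξ^3)) * Real.log (1 + ξ/σ * (x - μ))))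
          + ((ξ/σ) * (1 + ξ/σ * (x - μ)) ^ (-(1 + 1/ξ) - 1) *
            (1/(σ*ξ^3) - (1 + 1/ξ) * (-((ξ^2+4*ξ+2)/((1+ξ)*σ*ξ^3)) +
              1/(σ*ξ^3) * Real.log (1 + ξ/σ * (x - μ))))
          + (ξ/σ) * (1 + ξ/σ * (x - μ)) ^ (-(2 + 1/ξ) - 1) *
            ((0:ℝ) - (2 + 1/ξ) * ((1+ξ)/(σ*ξ^3) +
              (0:ℝ) * Real.log (1 + ξ/σ * (x - μ))))))
        (Set.Ioi μ) := by
      intro x hx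
      have hw : 0 < 1 + ξ * (x - μ) / σ := hwpos x hx
      have hwne : (1 + ξ * (x - μ) / σ) ≠ 0 := hw.ne'
      have hbw : 1 + ξ/σ * (x - μ) = 1 + ξ * (x - μ) / σ := by ring
      simp only [gp3ScoreMu, gp3ScoreXi, gp3ScoreSigma, gp3Pdf, hbw]
      have hswne : σ + ξ * (x - μ) ≠ 0 := by
        have h2 : 0 < ξ * (x - μ) := mul_pos hξ (sub_pos.mpr hx)
        positivity
      have e0 : (1 + ξ * (x - μ) / σ) ^ (-(1/ξ) - 1)
          = (1 + ξ * (x - μ) / σ) ^ (-1 - 1/ξ : ℝ) := by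
        congr 1; ring
      have e1 : (1 + ξ * (x - μ) / σ) ^ (-(1 + 1/ξ) - 1)
          = (1 + ξ * (x - μ) / σ) ^ (-1 - 1/ξ) * (1 + ξ * (x - μ) / σ)⁻¹ := by
        rw [show -(1 + 1/ξ) - 1 = (-1 - 1/ξ) + (-1) by ring, Real.rpow_add hw,
          Real.rpow_neg_one]
      have e2 : (1 + ξ * (x - μ) / σ) ^ (-(2 + 1/ξ) - 1)
          = (1 + ξ * (x - μ) / σ) ^ (-1 - 1/ξ) * (1 + ξ * (x - μ) / σ)⁻¹
              * (1 + ξ * (x - μ) / σ)⁻¹ := by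
        rw [show -(2 + 1/ξ) - 1 = ((-1 - 1/ξ) + (-1)) + (-1) by ring, Real.rpow_add hw,
          Real.rpow_add hw, Real.rpow_neg_one]
      rw [e0, e1, e2]
      generalize Real.log (1 + ξ * (x - μ) / σ) = L
      generalize (1 + ξ * (x - μ) / σ) ^ (-1 - 1/ξ : ℝ) = t
      field_simp [hwne, hswne, h1ξ.ne']
      ring
    have hI12 : MeasureTheory.IntegrableOn
        (fun x => (ξ/σ) * (1 + ξ/σ * (x - μ)) ^ (-(1 + 1/ξ) - 1) *
            (1/(σ*ξ^3) - (1 + 1/ξ) * (-((ξ^2+4*ξ+2)/((1+ξ)*σ*ξ^3)) +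
              1/(σ*ξ^3) * Real.log (1 + ξ/σ * (x - μ))))
          + (ξ/σ) * (1 + ξ/σ * (x - μ)) ^ (-(2 + 1/ξ) - 1) *
            ((0:ℝ) - (2 + 1/ξ) * ((1+ξ)/(σ*ξ^3) +
              (0:ℝ) * Real.log (1 + ξ/σ * (x - μ))))) (Set.Ioi μ) MeasureTheory.volume := hI1.add hI2
    rw [MeasureTheory.setIntegral_congr_fun measurableSet_Ioi heq,
      MeasureTheory.integral_add hI0 hI12,
      MeasureTheory.integral_add hI1 hI2, hV0, hV1, hV2]
    field_simp
    ring
end
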